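/- arXiv:1902.00612 — 6 statements merged into one kernel-verified Lean document; each statement's English description precedes it below -/
import Mathlib

section
/- For every k ≥ 3 and n ≥ 5, every edge coloring of the complete graph K_n using at most k colors contains either a rainbow path P_4 on 4 vertices or a monochromatic path P_3 on 3 vertices; moreover there exists a 3-coloring of K_4 (each color class a perfect matching) with no rainbow P_4 and no monochromatic P_3. Hence gr_k(P_4 : P_3) = 5 for all k ≥ 3. -/
open SimpleGraph

/-- A rainbow path on `ℓ` vertices in an edge coloring `c` of the complete graph on `Fin n`:
an injective sequence of `ℓ` vertices whose `ℓ - 1` consecutive edges get pairwise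
distinct colors. -/
def hasRainbowPath (ℓ : ℕ) {n : ℕ} {α : Type*} (c : Sym2 (Fin n) → α) : Prop :=
  ∃ f : Fin ℓ ↪ Fin n, Function.Injective (fun i : Fin (ℓ - 1) =>
    c s(f ⟨i.1, by have := i.2; omega⟩, f ⟨i.1 + 1, by have := i.2; omega⟩))

/-- A copy of the graph `H` all of whose edges receive the color `i`. -/
def hasCopyInColor {V : Type*} (H : SimpleGraph V) {n : ℕ} {α : Type*}
    (c : Sym2 (Fin n) → α) (i : α) : Prop :=
  ∃ f : V ↪ Fin n, ∀ u v, H.Adj u v → c s(f u, f v) = i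

/-- A monochromatic copy of the graph `H`. -/
def hasMonoCopy {V : Type*} (H : SimpleGraph V) {n : ℕ} {α : Type*}
    (c : Sym2 (Fin n) → α) : Prop :=
  ∃ i, hasCopyInColor H c i

/-- The graph formed by the edges of color `i`. -/
def colorGraph {n : ℕ} {α : Type*} (c : Sym2 (Fin n) → α) (i : α) : SimpleGraph (Fin n) :=
  SimpleGraph.fromEdgeSet {e | c e = i ∧ ¬ e.IsDiag}

/-- A copy, in color `i`, of some connected graph containing `H` as a subgraph:
equivalently, a copy of `H` in color `i` whose vertices all lie in a single
connected component of the graph of color-`i` edges. -/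
def hasConnCopyInColor {V : Type*} (H : SimpleGraph V) {n : ℕ} {α : Type*}
    (c : Sym2 (Fin n) → α) (i : α) : Prop :=
  ∃ f : V ↪ Fin n, (∀ u v, H.Adj u v → c s(f u, f v) = i) ∧
    ∀ u v, (colorGraph c i).Reachable (f u) (f v)

/-- A monochromatic copy of some connected graph containing `H` as a subgraph. -/
def hasMonoConnCopy {V : Type*} (H : SimpleGraph V) {n : ℕ} {α : Type*}
    (c : Sym2 (Fin n) → α) : Prop :=
  ∃ i, hasConnCopyInColor H c i

/-- The `k`-color Ramsey number `R_k(H)`. -/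
noncomputable def ramsey {V : Type*} (H : SimpleGraph V) (k : ℕ) : ℕ :=
  sInf {n | ∀ c : Sym2 (Fin n) → Fin k, hasMonoCopy H c}

/-- The asymmetric two-color Ramsey number `R(F, G)`. -/
noncomputable def ramseyPair {V W : Type*} (F : SimpleGraph V) (G : SimpleGraph W) : ℕ :=
  sInf {n | ∀ c : Sym2 (Fin n) → Fin 2, hasCopyInColor F c 0 ∨ hasCopyInColor G c 1}

/-- `R_2(𝒞(H))`, the two-color Ramsey number of the family of connected graphs
containing `H` as a subgraph. -/
noncomputable def ramseyConn {V : Type*} (H : SimpleGraph V) : ℕ :=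
  sInf {n | ∀ c : Sym2 (Fin n) → Fin 2, hasMonoConnCopy H c}

/-- `R(𝒞(F), G)`, the asymmetric Ramsey number: red member of the family of
connected graphs containing `F`, versus blue copy of `G`. -/
noncomputable def ramseyConnPair {V W : Type*} (F : SimpleGraph V) (G : SimpleGraph W) : ℕ :=
  sInf {n | ∀ c : Sym2 (Fin n) → Fin 2, hasConnCopyInColor F c 0 ∨ hasCopyInColor G c 1}

/-- The Gallai-Ramsey number `gr_k(P_ℓ : H)`: least `n` such that every `k`-coloring of
the edges of `K_n` contains a rainbow path on `ℓ` vertices or a monochromatic copy of `H`. -/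
noncomputable def gallaiRamsey (ℓ : ℕ) {V : Type*} (H : SimpleGraph V) (k : ℕ) : ℕ :=
  sInf {n | ∀ c : Sym2 (Fin n) → Fin k, hasRainbowPath ℓ c ∨ hasMonoCopy H c}

/-- `m` vertex-disjoint copies of `H`. -/
def nCopies (m : ℕ) {V : Type*} (H : SimpleGraph V) : SimpleGraph (Fin m × V) where
  Adj a b := a.1 = b.1 ∧ H.Adj a.2 b.2
  symm := ⟨by rintro a b ⟨h1, h2⟩; exact ⟨h1.symm, h2.symm⟩⟩
  loopless := ⟨by rintro a ⟨-, h⟩; exact H.irrefl h⟩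

/-- `s(G)` with respect to `r` colors: the minimum size of a color class over all
proper vertex colorings of `G` with `r` colors. -/
noncomputable def minClass {V : Type*} (G : SimpleGraph V) (r : ℕ) : ℕ :=
  sInf {n | ∃ (C : G.Coloring (Fin r)) (i : Fin r), n = Nat.card {v : V | C v = i}}

section GallaiAux

def grP4c4 : Sym2 (Fin 4) → Fin 3 :=
  Sym2.lift ⟨fun u v => ⟨((u.1 ^^^ v.1) + 2) % 3, Nat.mod_lt _ (by norm_num)⟩,
    by intro u v; simp only [Fin.mk.injEq]; rw [Nat.xor_comm]⟩

lemma grP4c4_matching : ∀ i : Fin 3, ∀ v : Fin 4, ∃! u, u ≠ v ∧ grP4c4 s(v, u) = i := by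
  unfold ExistsUnique; decide

lemma grP4c4_no_adj : ∀ x y z : Fin 4, x ≠ y → y ≠ z → x ≠ z →
    grP4c4 s(x, y) ≠ grP4c4 s(y, z) := by decide

lemma grP4c4_no_rb : ∀ a b d e : Fin 4, a ≠ b → a ≠ d → a ≠ e → b ≠ d → b ≠ e → d ≠ e →
    ¬(grP4c4 s(a, b) ≠ grP4c4 s(b, d) ∧ grP4c4 s(b, d) ≠ grP4c4 s(d, e) ∧
      grP4c4 s(a, b) ≠ grP4c4 s(d, e)) := by decide

lemma grP4c4_no_mono : ¬ hasMonoCopy (SimpleGraph.pathGraph 3) grP4c4 := by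
  rintro ⟨i, f, hf⟩
  have h01 : grP4c4 s(f 0, f 1) = i := hf 0 1 (by rw [SimpleGraph.pathGraph_adj]; left; rfl)
  have h12 : grP4c4 s(f 1, f 2) = i := hf 1 2 (by rw [SimpleGraph.pathGraph_adj]; left; rfl)
  exact grP4c4_no_adj (f 0) (f 1) (f 2) (f.injective.ne (by decide))
    (f.injective.ne (by decide)) (f.injective.ne (by decide)) (h01.trans h12.symm)

lemma grP4c4_no_rainbow : ¬ hasRainbowPath 4 grP4c4 := by
  rintro ⟨f, hf⟩
  have h01 := hf.ne (show (⟨0, by omega⟩ : Fin 3) ≠ ⟨1, by omega⟩ by decide)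
  have h12 := hf.ne (show (⟨1, by omega⟩ : Fin 3) ≠ ⟨2, by omega⟩ by decide)
  have h02 := hf.ne (show (⟨0, by omega⟩ : Fin 3) ≠ ⟨2, by omega⟩ by decide)
  simp only at h01 h12 h02
  exact grP4c4_no_rb (f ⟨0, by omega⟩) (f ⟨1, by omega⟩) (f ⟨2, by omega⟩) (f ⟨3, by omega⟩)
    (f.injective.ne (by decide)) (f.injective.ne (by decide)) (f.injective.ne (by decide))
    (f.injective.ne (by decide)) (f.injective.ne (by decide)) (f.injective.ne (by decide))
    ⟨h01, h12, h02⟩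

lemma grP4_mono_of_adj_eq {n : ℕ} {α : Type*} (c : Sym2 (Fin n) → α) (x y z : Fin n)
    (hxy : x ≠ y) (hyz : y ≠ z) (hxz : x ≠ z)
    (h : c s(x, y) = c s(y, z)) : hasMonoCopy (SimpleGraph.pathGraph 3) c := by
  refine ⟨c s(x, y), ⟨![x, y, z], ?_⟩, ?_⟩
  · intro a b hab
    fin_cases a <;> fin_cases b <;> simp_all
  · intro u v huv
    rw [SimpleGraph.pathGraph_adj] at huv
    change c s(![x, y, z] u, ![x, y, z] v) = c s(x, y)
    fin_cases u <;> fin_cases v <;> simp at huv ⊢ <;> simp only [Sym2.eq_swap, h]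

lemma grP4_rainbow_of_distinct {n : ℕ} {α : Type*} (c : Sym2 (Fin n) → α) (u v w x : Fin n)
    (huv : u ≠ v) (huw : u ≠ w) (hux : u ≠ x) (hvw : v ≠ w) (hvx : v ≠ x) (hwx : w ≠ x)
    (h1 : c s(u, v) ≠ c s(v, w)) (h2 : c s(v, w) ≠ c s(w, x)) (h3 : c s(u, v) ≠ c s(w, x)) :
    hasRainbowPath 4 c := by
  refine ⟨⟨![u, v, w, x], ?_⟩, ?_⟩
  · intro a b hab
    fin_cases a <;> fin_cases b <;> simp_all
  · intro a b hab
    simp only at hab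
    change c s(![u, v, w, x] ⟨a.1, by have := a.2; omega⟩, ![u, v, w, x] ⟨a.1 + 1, by have := a.2; omega⟩) =
      c s(![u, v, w, x] ⟨b.1, by have := b.2; omega⟩, ![u, v, w, x] ⟨b.1 + 1, by have := b.2; omega⟩) at hab
    fin_cases a <;> fin_cases b <;> simp_all

lemma grP4_upper {k n : ℕ} (hn : 5 ≤ n) (c : Sym2 (Fin n) → Fin k) :
    hasRainbowPath 4 c ∨ hasMonoCopy (SimpleGraph.pathGraph 3) c := by
  by_contra hcon
  push_neg at hcon
  obtain ⟨hR, hM⟩ := hcon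
  have adj : ∀ x y z : Fin n, x ≠ y → y ≠ z → x ≠ z → c s(x, y) ≠ c s(y, z) :=
    fun x y z h1 h2 h3 he => hM (grP4_mono_of_adj_eq c x y z h1 h2 h3 he)
  have ends : ∀ a b d e : Fin n, a ≠ b → a ≠ d → a ≠ e → b ≠ d → b ≠ e → d ≠ e →
      c s(a, b) = c s(d, e) := by
    intro a b d e h1 h2 h3 h4 h5 h6
    by_contra hne
    exact hR (grP4_rainbow_of_distinct c a b d e h1 h2 h3 h4 h5 h6
      (adj a b d h1 h4 h2) (adj b d e h4 h6 h5) hne)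
  set v : Fin 5 → Fin n := fun i => ⟨i.1, by omega⟩ with hv
  have hne : ∀ i j : Fin 5, i ≠ j → v i ≠ v j := by
    intro i j hij h
    apply hij; have : (v i).1 = (v j).1 := congrArg Fin.val h; exact Fin.ext this
  have e1 : c s(v 0, v 1) = c s(v 2, v 3) :=
    ends _ _ _ _ (hne 0 1 (by decide)) (hne 0 2 (by decide)) (hne 0 3 (by decide))
      (hne 1 2 (by decide)) (hne 1 3 (by decide)) (hne 2 3 (by decide))
  have e2 : c s(v 0, v 1) = c s(v 2, v 4) :=
    ends _ _ _ _ (hne 0 1 (by decide)) (hne 0 2 (by decide)) (hne 0 4 (by decide))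
      (hne 1 2 (by decide)) (hne 1 4 (by decide)) (hne 2 4 (by decide))
  have e3 : c s(v 3, v 2) ≠ c s(v 2, v 4) :=
    adj _ _ _ (hne 3 2 (by decide)) (hne 2 4 (by decide)) (hne 3 4 (by decide))
  rw [Sym2.eq_swap] at e3
  exact e3 (e1 ▸ e2)

lemma grP4_lower {k m : ℕ} (hk : 3 ≤ k) (hm : m ≤ 4) :
    ∃ c : Sym2 (Fin m) → Fin k,
      ¬ hasRainbowPath 4 c ∧ ¬ hasMonoCopy (SimpleGraph.pathGraph 3) c := by
  set e : Fin m → Fin 4 := Fin.castLE hm with he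
  have einj : Function.Injective e := Fin.castLE_injective hm
  set γ : Fin 3 → Fin k := Fin.castLE hk with hγ
  have γinj : Function.Injective γ := Fin.castLE_injective hk
  refine ⟨fun s => γ (grP4c4 (s.map e)), ?_, ?_⟩
  · rintro ⟨f, hf⟩
    apply grP4c4_no_rainbow
    refine ⟨⟨e ∘ f, einj.comp f.injective⟩, ?_⟩
    intro a b hab
    apply hf
    simp only [Function.Embedding.coeFn_mk, Function.comp_apply] at hab ⊢
    rw [Sym2.map_pair_eq, Sym2.map_pair_eq]
    exact congrArg γ hab
  · rintro ⟨i, f, hf⟩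
    apply grP4c4_no_mono
    refine ⟨grP4c4 s(e (f 0), e (f 1)), ⟨e ∘ f, einj.comp f.injective⟩, ?_⟩
    intro u v huv
    apply γinj
    have h1 : γ (grP4c4 s(e (f u), e (f v))) = i := by
      have h := hf u v huv
      simp only [Sym2.map_pair_eq] at h
      exact h
    have h2 : γ (grP4c4 s(e (f 0), e (f 1))) = i := by
      have h := hf 0 1 (by rw [SimpleGraph.pathGraph_adj]; left; rfl)
      simp only [Sym2.map_pair_eq] at h
      exact h
    simp only [Function.Embedding.coeFn_mk, Function.comp_apply]
    rw [h1, h2]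

end GallaiAux

/-- For `k ≥ 3` and `n ≥ 5`, every `k`-coloring of `K_n` contains a rainbow `P₄` or a
monochromatic `P₃`; there is a 3-coloring of `K₄`, each color class a perfect matching,
with no rainbow `P₄` and no monochromatic `P₃`; hence `gr_k(P₄ : P₃) = 5`. -/


theorem stmt0 (k : ℕ) (hk : 3 ≤ k) :
    (∀ n, 5 ≤ n → ∀ c : Sym2 (Fin n) → Fin k,
      hasRainbowPath 4 c ∨ hasMonoCopy (SimpleGraph.pathGraph 3) c) ∧
    (∃ c : Sym2 (Fin 4) → Fin 3,
      (∀ i : Fin 3, ∀ v : Fin 4, ∃! u, u ≠ v ∧ c s(v, u) = i) ∧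
      ¬ hasRainbowPath 4 c ∧ ¬ hasMonoCopy (SimpleGraph.pathGraph 3) c) ∧
    gallaiRamsey 4 (SimpleGraph.pathGraph 3) k = 5 := by
  refine ⟨fun n hn c => grP4_upper hn c, ⟨grP4c4, grP4c4_matching, grP4c4_no_rainbow, grP4c4_no_mono⟩, ?_⟩
  have h5 : 5 ∈ {n | ∀ c : Sym2 (Fin n) → Fin k,
      hasRainbowPath 4 c ∨ hasMonoCopy (SimpleGraph.pathGraph 3) c} :=
    fun c => grP4_upper (le_refl 5) c
  refine le_antisymm (Nat.sInf_le h5) ?_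
  by_contra h
  push_neg at h
  have hmem := Nat.sInf_mem (⟨5, h5⟩ : Set.Nonempty {n | ∀ c : Sym2 (Fin n) → Fin k,
      hasRainbowPath 4 c ∨ hasMonoCopy (SimpleGraph.pathGraph 3) c})
  obtain ⟨c, hc1, hc2⟩ := grP4_lower hk (Nat.lt_succ_iff.mp h)
  rcases hmem c with h1 | h2
  · exact hc1 h1
  · exact hc2 h2
end

section
/- Every edge coloring of K_n (n ≥ 4) containing no rainbow path on 4 vertices either uses at most two colors, or has n = 4 and is the 3-coloring of K_4 in which each color class is a perfect matching. -/
open SimpleGraph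

lemma rbR {n : ℕ} {α : Type*} (c : Sym2 (Fin n) → α) (h : ¬ hasRainbowPath 4 c)
    (p q r s : Fin n) (h1 : p≠q) (h2 : p≠r) (h3 : p≠s) (h4 : q≠r) (h5 : q≠s) (h6 : r≠s) :
    c s(p,q) = c s(q,r) ∨ c s(p,q) = c s(r,s) ∨ c s(q,r) = c s(r,s) := by
  by_contra hc
  push_neg at hc
  obtain ⟨e1, e2, e3⟩ := hc
  apply h
  refine ⟨⟨![p,q,r,s], ?_⟩, ?_⟩
  · intro i j hij
    fin_cases i <;> fin_cases j <;> simp_all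
  · intro i j hij
    fin_cases i <;> fin_cases j <;> simp_all <;>
      first
        | exact e1 hij | exact e2 hij | exact e3 hij
        | exact e1 hij.symm | exact e2 hij.symm | exact e3 hij.symm

lemma keyTwo {n : ℕ} {α : Type*} (c : Sym2 (Fin n) → α) (h : ¬ hasRainbowPath 4 c)
    (u v w : Fin n) (a b : α) (huv : u ≠ v) (huw : u ≠ w) (hvw : v ≠ w) (hab : a ≠ b)
    (ha : c s(u,v) = a) (hb : c s(v,w) = b) (hd : c s(u,w) = a) :
    ∀ p q : Fin n, p ≠ q → c s(p,q) = a ∨ c s(p,q) = b := by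
  have hsw : ∀ x y : Fin n, c s(x,y) = c s(y,x) := fun x y => by rw [Sym2.eq_swap]
  have hvu : c s(v,u) = a := (hsw v u).trans ha
  have hwv : c s(w,v) = b := (hsw w v).trans hb
  have hwu : c s(w,u) = a := (hsw w u).trans hd
  have L1 : ∀ t : Fin n, t ≠ u → t ≠ v → t ≠ w → c s(w,t) = a ∨ c s(w,t) = b := by
    intro t h1 h2 h3
    have := rbR c h u v w t huv huw (Ne.symm h1) hvw (Ne.symm h2) (Ne.symm h3)
    rw [ha, hb] at this
    rcases this with h'|h'|h'
    exacts [absurd h' hab, Or.inl h'.symm, Or.inr h'.symm]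
  have L2 : ∀ t : Fin n, t ≠ u → t ≠ v → t ≠ w → c s(u,t) = a ∨ c s(u,t) = b := by
    intro t h1 h2 h3
    have := rbR c h w v u t (Ne.symm hvw) (Ne.symm huw) (Ne.symm h3) (Ne.symm huv) (Ne.symm h2) (Ne.symm h1)
    rw [hwv, hvu] at this
    rcases this with h'|h'|h'
    exacts [absurd h'.symm hab, Or.inr h'.symm, Or.inl h'.symm]
  have L3 : ∀ t : Fin n, t ≠ u → t ≠ v → t ≠ w → c s(v,t) = a ∨ c s(v,t) = b := by
    intro t h1 h2 h3
    rcases L1 t h1 h2 h3 with hwt | hwt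
    · rcases L2 t h1 h2 h3 with hut | hut
      · have := rbR c h w v t u (Ne.symm hvw) (Ne.symm h3) (Ne.symm huw) (Ne.symm h2) (Ne.symm huv) h1
        rw [hwv, hsw t u, hut] at this
        rcases this with h'|h'|h'
        exacts [Or.inr h'.symm, absurd h'.symm hab, Or.inl h']
      · have := rbR c h w u t v (Ne.symm huw) (Ne.symm h3) (Ne.symm hvw) (Ne.symm h1) huv h2
        rw [hwu, hut, hsw t v] at this
        rcases this with h'|h'|h'
        exacts [absurd h' hab, Or.inl h'.symm, Or.inr h'.symm]
    · have := rbR c h u v t w huv (Ne.symm h1) huw (Ne.symm h2) hvw h3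
      rw [ha, hsw t w, hwt] at this
      rcases this with h'|h'|h'
      exacts [Or.inl h'.symm, absurd h' hab, Or.inr h']
  have L4 : ∀ s t : Fin n, s ≠ u → s ≠ v → s ≠ w → t ≠ u → t ≠ v → t ≠ w → s ≠ t →
      c s(s,t) = a ∨ c s(s,t) = b := by
    intro s t hs1 hs2 hs3 ht1 ht2 ht3 hst
    rcases L2 t ht1 ht2 ht3 with hut | hut
    · rcases L1 t ht1 ht2 ht3 with hwt | hwt
      · have := rbR c h s t w v hst hs3 hs2 ht3 ht2 (Ne.symm hvw)
        rw [hsw t w, hwt, hwv] at this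
        rcases this with h'|h'|h'
        exacts [Or.inl h', Or.inr h', absurd h' hab]
      · have := rbR c h u w t s huw (Ne.symm ht1) (Ne.symm hs1) (Ne.symm ht3) (Ne.symm hs3) (Ne.symm hst)
        rw [hd, hwt, hsw t s] at this
        rcases this with h'|h'|h'
        exacts [absurd h' hab, Or.inl h'.symm, Or.inr h'.symm]
    · have := rbR c h s t u v hst hs1 hs2 ht1 ht2 huv
      rw [hsw t u, hut, ha] at this
      rcases this with h'|h'|h'
      exacts [Or.inr h', Or.inl h', absurd h'.symm hab]
  have classify : ∀ t : Fin n, t = u ∨ t = v ∨ t = w ∨ (t ≠ u ∧ t ≠ v ∧ t ≠ w) := by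
    intro t; tauto
  intro p q hpq
  rcases classify p with rfl|rfl|rfl|⟨hp1,hp2,hp3⟩ <;>
    rcases classify q with rfl|rfl|rfl|⟨hq1,hq2,hq3⟩
  · exact absurd rfl hpq
  · exact Or.inl ha
  · exact Or.inl hd
  · exact L2 q hq1 hq2 hq3
  · exact Or.inl hvu
  · exact absurd rfl hpq
  · exact Or.inr hb
  · exact L3 q hq1 hq2 hq3
  · exact Or.inl hwu
  · exact Or.inr hwv
  · exact absurd rfl hpq
  · exact L1 q hq1 hq2 hq3
  · rw [Sym2.eq_swap]; exact L2 p hp1 hp2 hp3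
  · rw [Sym2.eq_swap]; exact L3 p hp1 hp2 hp3
  · rw [Sym2.eq_swap]; exact L1 p hp1 hp2 hp3
  · exact L4 p q hp1 hp2 hp3 hq1 hq2 hq3 hpq

set_option maxHeartbeats 2000000 in
/-- Every edge coloring of `K_n` (`n ≥ 4`) with no rainbow `P₄` uses at most two colors,
or `n = 4` and every color class is a perfect matching of `K₄`. -/
theorem stmt2 {n : ℕ} (hn : 4 ≤ n) {α : Type*} (c : Sym2 (Fin n) → α)
    (h : ¬ hasRainbowPath 4 c) :
    (∃ i j : α, ∀ e : Sym2 (Fin n), ¬ e.IsDiag → c e = i ∨ c e = j) ∨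
    (n = 4 ∧ ∀ e : Sym2 (Fin n), ¬ e.IsDiag →
      ∀ v : Fin n, ∃! u, u ≠ v ∧ c s(v, u) = c e) := by
  have hsw : ∀ x y : Fin n, c s(x,y) = c s(y,x) := fun x y => by rw [Sym2.eq_swap]
  have hex : ∀ S : Finset (Fin n), S.card < n → ∃ x, x ∉ S := by
    intro S hS
    by_contra hx
    push_neg at hx
    have hsub : (Finset.univ : Finset (Fin n)) ⊆ S := fun x _ => hx x
    have := Finset.card_le_card hsub
    simp [Finset.card_univ] at this
    omega
  by_cases hA : ∃ i j : α, ∀ e : Sym2 (Fin n), ¬ e.IsDiag → c e = i ∨ c e = j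
  · exact Or.inl hA
  right
  push_neg at hA
  -- get adjacent edges of different colors
  have hadj : ∃ u v w : Fin n, u ≠ v ∧ v ≠ w ∧ u ≠ w ∧ c s(u,v) ≠ c s(v,w) := by
    by_contra hno
    push_neg at hno
    have step : ∀ x y z : Fin n, x ≠ y → y ≠ z → c s(x,y) = c s(y,z) := by
      intro x y z hxy hyz
      by_cases hxz : x = z
      · subst hxz; rw [Sym2.eq_swap]
      · exact hno x y z hxy hyz hxz
    have same : ∀ x y z t : Fin n, x ≠ y → z ≠ t → c s(x,y) = c s(z,t) := by
      intro x y z t hxy hzt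
      by_cases hyz : y = z
      · subst hyz; exact step x y t hxy hzt
      · exact (step x y z hxy hyz).trans (step y z t hyz hzt)
    have h01 : (⟨0, by omega⟩ : Fin n) ≠ ⟨1, by omega⟩ := by
      intro hh
      have := congrArg Fin.val hh
      simp at this
    obtain ⟨e, hediag, he1, -⟩ :=
      hA (c s((⟨0, by omega⟩ : Fin n), (⟨1, by omega⟩ : Fin n)))
         (c s((⟨0, by omega⟩ : Fin n), (⟨1, by omega⟩ : Fin n)))
    revert hediag he1
    induction e using Sym2.ind with
    | _ p q =>
      intro hediag he1
      have hpq : p ≠ q := by simpa [Sym2.isDiag_iff_proj_eq] using hediag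
      exact he1 (same p q _ _ hpq h01)
  obtain ⟨u, v, w, huv, hvw, huw, hab⟩ := hadj
  obtain ⟨a, ha⟩ : ∃ a, c s(u,v) = a := ⟨_, rfl⟩
  obtain ⟨b, hb⟩ : ∃ b, c s(v,w) = b := ⟨_, rfl⟩
  rw [ha, hb] at hab
  by_cases hcuw : c s(u,w) = a ∨ c s(u,w) = b
  · exfalso
    obtain ⟨e, hediag, he1, he2⟩ := hA a b
    revert hediag he1 he2
    induction e using Sym2.ind with
    | _ p q =>
      intro hediag he1 he2
      have hpq : p ≠ q := by simpa [Sym2.isDiag_iff_proj_eq] using hediag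
      rcases hcuw with hcw | hcw
      · rcases keyTwo c h u v w a b huv huw hvw hab ha hb hcw p q hpq with h' | h'
        exacts [he1 h', he2 h']
      · have hwv : c s(w,v) = b := (hsw w v).trans hb
        have hvu : c s(v,u) = a := (hsw v u).trans ha
        have hwu : c s(w,u) = b := (hsw w u).trans hcw
        rcases keyTwo c h w v u b a (Ne.symm hvw) (Ne.symm huw) (Ne.symm huv)
          (Ne.symm hab) hwv hvu hwu p q hpq with h' | h'
        exacts [he2 h', he1 h']
  push_neg at hcuw
  obtain ⟨hda, hdb⟩ := hcuw
  -- facts about any vertex outside {u,v,w}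
  have Dwx : ∀ t : Fin n, t ≠ u → t ≠ v → t ≠ w → c s(w,t) = a := by
    intro t h1 h2 h3
    have F1 := rbR c h u v w t huv huw (Ne.symm h1) hvw (Ne.symm h2) (Ne.symm h3)
    rw [ha, hb] at F1
    have F2 := rbR c h v u w t (Ne.symm huv) hvw (Ne.symm h2) huw (Ne.symm h1) (Ne.symm h3)
    rw [hsw v u, ha] at F2
    rcases F2 with f2|f2|f2
    · exact absurd f2.symm hda
    · exact f2.symm
    · rcases F1 with f1|f1|f1
      · exact absurd f1 hab
      · exact absurd (f2.trans f1.symm) hda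
      · exact absurd (f2.trans f1.symm) hdb
  have Dux : ∀ t : Fin n, t ≠ u → t ≠ v → t ≠ w → c s(u,t) = b := by
    intro t h1 h2 h3
    have F1 := rbR c h w v u t (Ne.symm hvw) (Ne.symm huw) (Ne.symm h3) (Ne.symm huv)
      (Ne.symm h2) (Ne.symm h1)
    rw [hsw w v, hb, hsw v u, ha] at F1
    have F2 := rbR c h v w u t hvw (Ne.symm huv) (Ne.symm h2) (Ne.symm huw) (Ne.symm h3)
      (Ne.symm h1)
    rw [hb, hsw w u] at F2
    rcases F2 with f2|f2|f2
    · exact absurd f2.symm hdb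
    · exact f2.symm
    · rcases F1 with f1|f1|f1
      · exact absurd f1.symm hab
      · exact f1.symm
      · exact absurd (f2.trans f1.symm) hda
  have Dvx : ∀ t : Fin n, t ≠ u → t ≠ v → t ≠ w → c s(v,t) = c s(u,w) := by
    intro t h1 h2 h3
    have F3 := rbR c h u w t v huw (Ne.symm h1) huv (Ne.symm h3) (Ne.symm hvw) h2
    rw [Dwx t h1 h2 h3, hsw t v] at F3
    have F4 := rbR c h w u t v (Ne.symm huw) (Ne.symm h3) (Ne.symm hvw) (Ne.symm h1) huv h2
    rw [hsw w u, Dux t h1 h2 h3, hsw t v] at F4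
    rcases F3 with f3|f3|f3
    · exact absurd f3 hda
    · exact f3.symm
    · rcases F4 with f4|f4|f4
      · exact absurd f4 hdb
      · exact f4.symm
      · exact absurd (f3.trans f4.symm) hab
  -- get a fourth vertex
  have hc3 : ({u,v,w} : Finset (Fin n)).card < n := by
    have t1 := Finset.card_insert_le u ({v,w} : Finset (Fin n))
    have t2 := Finset.card_insert_le v ({w} : Finset (Fin n))
    have t3 : ({w} : Finset (Fin n)).card = 1 := Finset.card_singleton w
    omega
  obtain ⟨x, hx⟩ := hex {u,v,w} hc3
  simp only [Finset.mem_insert, Finset.mem_singleton, not_or] at hx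
  obtain ⟨hx1, hx2, hx3⟩ := hx
  -- n = 4
  have hn4 : n = 4 := by
    by_contra h5'
    have h5 : 5 ≤ n := by omega
    have hc4 : ({u,v,w,x} : Finset (Fin n)).card < n := by
      have t0 := Finset.card_insert_le u ({v,w,x} : Finset (Fin n))
      have t1 := Finset.card_insert_le v ({w,x} : Finset (Fin n))
      have t2 := Finset.card_insert_le w ({x} : Finset (Fin n))
      have t3 : ({x} : Finset (Fin n)).card = 1 := Finset.card_singleton x
      omega
    obtain ⟨y, hy⟩ := hex {u,v,w,x} hc4
    simp only [Finset.mem_insert, Finset.mem_singleton, not_or] at hy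
    obtain ⟨hy1, hy2, hy3, hy4⟩ := hy
    have := rbR c h x u w y hx1 hx3 (fun hh => hy4 hh.symm) huw (Ne.symm hy1) (Ne.symm hy3)
    rw [hsw x u, Dux x hx1 hx2 hx3, Dwx y hy1 hy2 hy3] at this
    rcases this with f|f|f
    · exact hdb f.symm
    · exact hab f.symm
    · exact hda f
  refine ⟨hn4, ?_⟩
  -- the four vertices cover everything
  have cover : ∀ t : Fin n, t = u ∨ t = v ∨ t = w ∨ t = x := by
    intro t
    by_contra ht
    push_neg at ht
    obtain ⟨ht1, ht2, ht3, ht4⟩ := ht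
    have c5 : ({u,v,w,x,t} : Finset (Fin n)).card = 5 := by
      rw [Finset.card_insert_of_notMem (by
            simp only [Finset.mem_insert, Finset.mem_singleton, not_or]
            exact ⟨huv, huw, Ne.symm hx1, Ne.symm ht1⟩),
          Finset.card_insert_of_notMem (by
            simp only [Finset.mem_insert, Finset.mem_singleton, not_or]
            exact ⟨hvw, Ne.symm hx2, Ne.symm ht2⟩),
          Finset.card_insert_of_notMem (by
            simp only [Finset.mem_insert, Finset.mem_singleton, not_or]
            exact ⟨Ne.symm hx3, Ne.symm ht3⟩),
          Finset.card_insert_of_notMem (by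
            simp only [Finset.mem_singleton]
            exact Ne.symm ht4),
          Finset.card_singleton]
    have hle := Finset.card_le_univ ({u,v,w,x,t} : Finset (Fin n))
    simp only [c5, Finset.card_univ, Fintype.card_fin] at hle
    omega
  -- color table
  have hwx : c s(w,x) = a := Dwx x hx1 hx2 hx3
  have hux : c s(u,x) = b := Dux x hx1 hx2 hx3
  have hvx : c s(v,x) = c s(u,w) := Dvx x hx1 hx2 hx3
  have hvu : c s(v,u) = a := (hsw v u).trans ha
  have hwv : c s(w,v) = b := (hsw w v).trans hb
  have hwu : c s(w,u) = c s(u,w) := hsw w u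
  have hxw : c s(x,w) = a := (hsw x w).trans hwx
  have hxu : c s(x,u) = b := (hsw x u).trans hux
  have hxv : c s(x,v) = c s(u,w) := (hsw x v).trans hvx
  have cols : ∀ p q : Fin n, p ≠ q → c s(p,q) = a ∨ c s(p,q) = b ∨ c s(p,q) = c s(u,w) := by
    intro p q hpq
    rcases cover p with rfl|rfl|rfl|rfl <;> rcases cover q with rfl|rfl|rfl|rfl <;>
      first
        | exact absurd rfl hpq
        | tauto
  have huniq : ∀ (t z1 z2 z3 : Fin n) (k : α),
      (∀ z : Fin n, z = t ∨ z = z1 ∨ z = z2 ∨ z = z3) → z1 ≠ t →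
      c s(t,z1) = k → c s(t,z2) ≠ k → c s(t,z3) ≠ k →
      ∃! z, z ≠ t ∧ c s(t,z) = k := by
    intro t z1 z2 z3 k cov hz1 hk1 hk2 hk3
    refine ⟨z1, ⟨hz1, hk1⟩, ?_⟩
    rintro y ⟨hyt, hyk⟩
    rcases cov y with rfl|rfl|rfl|rfl
    · exact absurd rfl hyt
    · rfl
    · exact absurd hyk hk2
    · exact absurd hyk hk3
  intro e he t
  have hce : c e = a ∨ c e = b ∨ c e = c s(u,w) := by
    revert he
    induction e using Sym2.ind with
    | _ p q =>
      intro he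
      exact cols p q (by simpa [Sym2.isDiag_iff_proj_eq] using he)
  rcases cover t with ht|ht|ht|ht <;> rw [ht] <;> rcases hce with hk|hk|hk <;> rw [hk]
  · exact huniq u v x w a (fun z => by rcases cover z with h|h|h|h <;> tauto)
      (Ne.symm huv) ha (by rw [hux]; exact Ne.symm hab) hda
  · exact huniq u x v w b (fun z => by rcases cover z with h|h|h|h <;> tauto)
      hx1 hux (by rw [ha]; exact hab) hdb
  · exact huniq u w v x (c s(u,w)) (fun z => by rcases cover z with h|h|h|h <;> tauto)
      (Ne.symm huw) rfl (by rw [ha]; exact fun hh => hda hh.symm)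
      (by rw [hux]; exact fun hh => hdb hh.symm)
  · exact huniq v u w x a (fun z => by rcases cover z with h|h|h|h <;> tauto)
      huv hvu (by rw [hb]; exact Ne.symm hab) (by rw [hvx]; exact hda)
  · exact huniq v w u x b (fun z => by rcases cover z with h|h|h|h <;> tauto)
      (Ne.symm hvw) hb (by rw [hvu]; exact hab) (by rw [hvx]; exact hdb)
  · exact huniq v x u w (c s(u,w)) (fun z => by rcases cover z with h|h|h|h <;> tauto)
      hx2 hvx (by rw [hvu]; exact fun hh => hda hh.symm)
      (by rw [hb]; exact fun hh => hdb hh.symm)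
  · exact huniq w x v u a (fun z => by rcases cover z with h|h|h|h <;> tauto)
      hx3 hwx (by rw [hwv]; exact Ne.symm hab) (by rw [hwu]; exact hda)
  · exact huniq w v x u b (fun z => by rcases cover z with h|h|h|h <;> tauto)
      hvw hwv (by rw [hwx]; exact hab) (by rw [hwu]; exact hdb)
  · exact huniq w u v x (c s(u,w)) (fun z => by rcases cover z with h|h|h|h <;> tauto)
      huw hwu (by rw [hwv]; exact fun hh => hdb hh.symm)
      (by rw [hwx]; exact fun hh => hda hh.symm)
  · exact huniq x w u v a (fun z => by rcases cover z with h|h|h|h <;> tauto)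
      (Ne.symm hx3) hxw (by rw [hxu]; exact Ne.symm hab) (by rw [hxv]; exact hda)
  · exact huniq x u w v b (fun z => by rcases cover z with h|h|h|h <;> tauto)
      (Ne.symm hx1) hxu (by rw [hxw]; exact hab) (by rw [hxv]; exact hdb)
  · exact huniq x v w u (c s(u,w)) (fun z => by rcases cover z with h|h|h|h <;> tauto)
      (Ne.symm hx2) hxv (by rw [hxw]; exact fun hh => hda hh.symm)
      (by rw [hxu]; exact fun hh => hdb hh.symm)
end

section
/- For m ≥ n ≥ 1, R(C(mC_5), nK_2) = 5m + n − 1: every red/blue coloring of K_{5m+n-1} contains a red connected subgraph containing m disjoint 5-cycles or a blue matching of size n, and this fails for K_{5m+n-2}. -/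
open SimpleGraph

/-! ### Auxiliary machinery -/

section Aux

/-- A blue matching of size `k` in a 2-coloring of `K_N`. -/
def Mtch {N : ℕ} (c : Sym2 (Fin N) → Fin 2) (k : ℕ) : Prop :=
  ∃ a b : Fin k → Fin N,
    Function.Injective a ∧ Function.Injective b ∧
    (∀ i j, a i ≠ b j) ∧ (∀ i, c s(a i, b i) = 1)

lemma mtch_zero {N : ℕ} (c : Sym2 (Fin N) → Fin 2) : Mtch c 0 :=
  ⟨fun i => i.elim0, fun i => i.elim0, fun i => i.elim0, fun i => i.elim0,
    fun i => i.elim0, fun i => i.elim0⟩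

lemma mtch_iff_copy {N n : ℕ} (c : Sym2 (Fin N) → Fin 2) :
    Mtch c n ↔ hasCopyInColor (nCopies n (SimpleGraph.pathGraph 2)) c 1 := by
  constructor
  · rintro ⟨a, b, ha, hb, hab, hcol⟩
    refine ⟨⟨fun x => if x.2 = 0 then a x.1 else b x.1, ?_⟩, ?_⟩
    · rintro ⟨i, u⟩ ⟨j, v⟩ h
      fin_cases u <;> fin_cases v <;> simp only [if_pos rfl, if_neg (by decide : ¬(1:Fin 2) = 0)] at h
      · exact congrArg (·, _) (ha h)
      · exact absurd h (hab i j)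
      · exact absurd h.symm (hab j i)
      · exact congrArg (·, _) (hb h)
    · rintro ⟨i, u⟩ ⟨j, v⟩ ⟨hij, huv⟩
      simp only at hij; subst hij
      rw [SimpleGraph.pathGraph_adj] at huv
      fin_cases u <;> fin_cases v <;> simp only [Fin.val] at huv <;>
        first
        | omega
        | (simp only [Function.Embedding.coeFn_mk,
            if_pos rfl, if_neg (by decide : ¬(1:Fin 2) = 0)]
           first
           | exact hcol i
           | (rw [Sym2.eq_swap]; exact hcol i))
  · rintro ⟨f, hf⟩
    refine ⟨fun i => f (i, 0), fun i => f (i, 1), ?_, ?_, ?_, ?_⟩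
    · intro i j h
      have := f.injective h
      exact (Prod.mk.injEq _ _ _ _).mp this |>.1
    · intro i j h
      have := f.injective h
      exact (Prod.mk.injEq _ _ _ _).mp this |>.1
    · intro i j h
      have := f.injective h
      simp at this
    · intro i
      exact hf (i, 0) (i, 1) ⟨rfl, by rw [SimpleGraph.pathGraph_adj]; left; rfl⟩

lemma fin_mk_inj {k l : ℕ} {j1 j2 : Fin l} {h1 : (j1:ℕ) < k} {h2 : (j2:ℕ) < k}
    (h : (⟨(j1:ℕ), h1⟩ : Fin k) = ⟨(j2:ℕ), h2⟩) : j1 = j2 := by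
  have := congrArg Fin.val h
  simp only at this
  exact Fin.ext this

lemma cyc5_class : ∀ j j2 : Fin 5, (SimpleGraph.cycleGraph 5).Adj j j2 →
    (j.val = 0 → j2.val = 1 ∨ j2.val = 4) := by decide

lemma swap4_good : ∀ (k o : Fin 4), (o.val = 0 ∨ o.val = 3) → Equiv.swap 1 k o ≠ k := by decide

/-- The extremal coloring on `5m + n - 2` vertices. -/
noncomputable def cbad (m n : ℕ) : Sym2 (Fin (5*m+n-2)) → Fin 2 :=
  Sym2.lift ⟨fun x y => if x.val < n-1 ∨ y.val < n-1 then 1 else 0,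
    fun x y => if_congr or_comm rfl rfl⟩

lemma cbad_mk (m n : ℕ) (x y : Fin (5*m+n-2)) :
    cbad m n s(x, y) = if x.val < n-1 ∨ y.val < n-1 then 1 else 0 := rfl

lemma cbad_no_red (m n : ℕ) (hn : 1 ≤ n) (hm : 1 ≤ m) :
    ¬ hasConnCopyInColor (nCopies m (SimpleGraph.cycleGraph 5)) (cbad m n) 0 := by
  rintro ⟨f, hcol, -⟩
  have hbig : ∀ x : Fin m × Fin 5, n - 1 ≤ (f x).val := by
    rintro ⟨i, j⟩
    have hadj : (SimpleGraph.cycleGraph 5).Adj j (j + 1) := by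
      rw [SimpleGraph.cycleGraph_adj]; right; simp
    have := hcol (i, j) (i, j + 1) ⟨rfl, hadj⟩
    rw [cbad_mk] at this
    by_contra h
    rw [if_pos (Or.inl (by omega))] at this
    exact absurd this (by decide)
  have hcard : Fintype.card (Fin m × Fin 5) ≤ Fintype.card (Fin (5*m-1)) := by
    refine Fintype.card_le_of_injective
      (fun x => ⟨(f x).val - (n-1), by have h1 := (f x).isLt; have h2 := hbig x; omega⟩) ?_
    intro x y h
    have h1 := hbig x; have h2 := hbig y
    have := congrArg Fin.val h
    simp only at this
    exact f.injective (Fin.ext (by omega))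
  simp [Fintype.card_prod] at hcard
  omega

lemma cbad_no_blue (m n : ℕ) (hn : 1 ≤ n) :
    ¬ hasCopyInColor (nCopies n (SimpleGraph.pathGraph 2)) (cbad m n) 1 := by
  rintro ⟨f, hcol⟩
  have key : ∀ i : Fin n, (f (i,0)).val < n-1 ∨ (f (i,1)).val < n-1 := by
    intro i
    have := hcol (i, 0) (i, 1) ⟨rfl, by rw [SimpleGraph.pathGraph_adj]; left; rfl⟩
    rw [cbad_mk] at this
    by_contra h
    push_neg at h
    rw [if_neg (by omega)] at this
    exact absurd this (by decide)
  classical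
  have hcard : Fintype.card (Fin n) ≤ Fintype.card (Fin (n-1)) := by
    refine Fintype.card_le_of_injective
      (fun i => if h : (f (i,0)).val < n-1 then ⟨(f (i,0)).val, h⟩
        else ⟨(f (i,1)).val, (key i).resolve_left h⟩) ?_
    intro i j h
    by_cases hi : (f (i,0)).val < n-1 <;> by_cases hj : (f (j,0)).val < n-1 <;>
      simp only [dif_pos, dif_neg, hi, hj] at h <;>
    · have hv := congrArg Fin.val h
      have := f.injective (Fin.ext hv)
      exact ((Prod.mk.injEq _ _ _ _).mp this).1
  simp at hcard
  omega

/-- The main Ramsey-type construction: if there is no blue matching of size `n`,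
there is a red connected copy of `m C₅`. -/
lemma red_side (m n : ℕ) (hn : 1 ≤ n) (hmn : n ≤ m)
    (c : Sym2 (Fin (5*m+n-1)) → Fin 2) (hblue : ¬ Mtch c n) :
    hasConnCopyInColor (nCopies m (SimpleGraph.cycleGraph 5)) c 0 := by
  classical
  have hex : ∃ k, ¬ Mtch c k := ⟨n, hblue⟩
  have hKn : Nat.find hex ≤ n := Nat.find_min' hex hblue
  have hKnot : ¬ Mtch c (Nat.find hex) := Nat.find_spec hex
  have hKpos : 0 < Nat.find hex :=
    Nat.pos_of_ne_zero (fun h => hKnot (h ▸ mtch_zero c))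
  set ν := Nat.find hex - 1 with hνdef
  have hMν : Mtch c ν := not_not.mp (Nat.find_min hex (by omega))
  have hnot : ¬ Mtch c (ν + 1) := by
    rw [show ν + 1 = Nat.find hex by omega]; exact hKnot
  have hνn : ν ≤ n - 1 := by omega
  have hνm : ν < m := by omega
  obtain ⟨a, b, ha, hb, hab, hcol⟩ := hMν
  -- the set of unmatched vertices
  set S : Finset (Fin (5*m+n-1)) :=
    (Finset.image a Finset.univ ∪ Finset.image b Finset.univ)ᶜ with hSdef
  have hSmem : ∀ z : Fin (5*m+n-1), z ∈ S ↔ ∀ i, z ≠ a i ∧ z ≠ b i := by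
    intro z
    rw [hSdef, Finset.mem_compl, Finset.mem_union]
    simp only [Finset.mem_image, Finset.mem_univ, true_and, not_or, not_exists]
    constructor
    · rintro ⟨h1, h2⟩ i; exact ⟨fun hc => h1 i hc.symm, fun hc => h2 i hc.symm⟩
    · intro h; exact ⟨fun i hc => (h i).1 hc.symm, fun i hc => (h i).2 hc.symm⟩
  have hdisj : Disjoint (Finset.image a Finset.univ) (Finset.image b Finset.univ) := by
    rw [Finset.disjoint_left]
    rintro z hz1 hz2
    simp only [Finset.mem_image, Finset.mem_univ, true_and] at hz1 hz2
    obtain ⟨i, hi⟩ := hz1; obtain ⟨j, hj⟩ := hz2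
    exact hab i j (hi.trans hj.symm)
  have hScard : S.card = 5*m+n-1 - 2*ν := by
    rw [hSdef, Finset.card_compl, Finset.card_union_of_disjoint hdisj,
        Finset.card_image_of_injective _ ha, Finset.card_image_of_injective _ hb,
        Finset.card_univ, Fintype.card_fin, Fintype.card_fin]
    omega
  -- Claim A: S is a red clique
  have claimA : ∀ x ∈ S, ∀ y ∈ S, x ≠ y → c s(x, y) = 0 := by
    intro x hx y hy hxy
    by_contra hcon
    have hc1 : c s(x, y) = 1 := by omega
    apply hnot
    refine ⟨fun j => if h : (j : ℕ) < ν then a ⟨j, h⟩ else x,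
            fun j => if h : (j : ℕ) < ν then b ⟨j, h⟩ else y, ?_, ?_, ?_, ?_⟩
    · intro j1 j2 hj
      by_cases h1 : (j1 : ℕ) < ν <;> by_cases h2 : (j2 : ℕ) < ν <;>
        simp only [dif_pos, dif_neg, h1, h2] at hj
      · exact fin_mk_inj (ha hj)
      · exact absurd hj.symm (((hSmem x).mp hx ⟨j1, h1⟩).1)
      · exact absurd hj (((hSmem x).mp hx ⟨j2, h2⟩).1)
      · exact Fin.ext (by omega)
    · intro j1 j2 hj
      by_cases h1 : (j1 : ℕ) < ν <;> by_cases h2 : (j2 : ℕ) < ν <;>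
        simp only [dif_pos, dif_neg, h1, h2] at hj
      · exact fin_mk_inj (hb hj)
      · exact absurd hj.symm (((hSmem y).mp hy ⟨j1, h1⟩).2)
      · exact absurd hj (((hSmem y).mp hy ⟨j2, h2⟩).2)
      · exact Fin.ext (by omega)
    · intro j1 j2
      by_cases h1 : (j1 : ℕ) < ν <;> by_cases h2 : (j2 : ℕ) < ν <;>
        simp only [dif_pos, dif_neg, h1, h2]
      · exact hab _ _
      · exact fun hc => (((hSmem y).mp hy ⟨j1, h1⟩).1) hc.symm
      · exact fun hc => (((hSmem x).mp hx ⟨j2, h2⟩).2) hc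
      · exact hxy
    · intro j
      by_cases h1 : (j : ℕ) < ν <;> simp only [dif_pos, dif_neg, h1]
      · exact hcol _
      · exact hc1
  -- Claim B: for each matched pair, one endpoint is red to all of S but one vertex
  have claimB : ∀ i : Fin ν, ∃ w d : Fin (5*m+n-1), (w = a i ∨ w = b i) ∧
      ∀ x ∈ S, x ≠ d → c s(w, x) = 0 := by
    intro i
    by_cases hA : ∃ x ∈ S, c s(a i, x) = 1
    · obtain ⟨x0, hx0S, hx0⟩ := hA
      refine ⟨b i, x0, Or.inr rfl, ?_⟩
      intro x hxS hxd
      by_contra hcon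
      have hc1 : c s(b i, x) = 1 := by omega
      apply hnot
      refine ⟨fun j => if h : (j : ℕ) < ν then a ⟨j, h⟩ else b i,
              fun j => if h : (j : ℕ) < ν then
                (if (⟨j, h⟩ : Fin ν) = i then x0 else b ⟨j, h⟩) else x,
              ?_, ?_, ?_, ?_⟩
      · intro j1 j2 hj
        by_cases h1 : (j1 : ℕ) < ν <;> by_cases h2 : (j2 : ℕ) < ν <;>
          simp only [dif_pos, dif_neg, h1, h2] at hj
        · exact fin_mk_inj (ha hj)
        · exact absurd hj (hab _ _)
        · exact absurd hj.symm (hab _ _)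
        · exact Fin.ext (by omega)
      · intro j1 j2 hj
        by_cases h1 : (j1 : ℕ) < ν <;> by_cases h2 : (j2 : ℕ) < ν <;>
          simp only [dif_pos, dif_neg, h1, h2] at hj
        · by_cases e1 : (⟨j1, h1⟩ : Fin ν) = i <;> by_cases e2 : (⟨j2, h2⟩ : Fin ν) = i <;>
            simp only [e1, e2, if_true, if_false, ite_true, ite_false] at hj
          · exact Fin.ext (by
              have := congrArg Fin.val (e1.trans e2.symm); simpa using this)
          · exact absurd hj.symm (fun hc => (((hSmem x0).mp hx0S ⟨j2, h2⟩).2) hc.symm)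
          · exact absurd hj (fun hc => (((hSmem x0).mp hx0S ⟨j1, h1⟩).2) hc.symm)
          · exact fin_mk_inj (hb hj)
        · by_cases e1 : (⟨j1, h1⟩ : Fin ν) = i <;> simp only [e1, if_true, if_false, ite_true, ite_false] at hj
          · exact absurd hj.symm hxd
          · exact absurd hj.symm (((hSmem x).mp hxS ⟨j1, h1⟩).2)
        · by_cases e2 : (⟨j2, h2⟩ : Fin ν) = i <;> simp only [e2, if_true, if_false, ite_true, ite_false] at hj
          · exact absurd hj hxd
          · exact absurd hj (((hSmem x).mp hxS ⟨j2, h2⟩).2)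
        · exact Fin.ext (by omega)
      · intro j1 j2
        by_cases h1 : (j1 : ℕ) < ν <;> by_cases h2 : (j2 : ℕ) < ν <;>
          simp only [dif_pos, dif_neg, h1, h2]
        · by_cases e2 : (⟨j2, h2⟩ : Fin ν) = i <;> simp only [e2, if_true, if_false, ite_true, ite_false]
          · exact fun hc => (((hSmem x0).mp hx0S ⟨j1, h1⟩).1) hc.symm
          · exact hab _ _
        · exact fun hc => (((hSmem x).mp hxS ⟨j1, h1⟩).1) hc.symm
        · by_cases e2 : (⟨j2, h2⟩ : Fin ν) = i <;> simp only [e2, if_true, if_false, ite_true, ite_false]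
          · exact fun hc => (((hSmem x0).mp hx0S i).2) hc.symm
          · exact fun hc => e2 (hb hc).symm
        · exact fun hc => (((hSmem x).mp hxS i).2) hc.symm
      · intro j
        by_cases h1 : (j : ℕ) < ν <;> simp only [dif_pos, dif_neg, h1]
        · by_cases e1 : (⟨j, h1⟩ : Fin ν) = i <;> simp only [e1, if_true, if_false, ite_true, ite_false]
          · exact hx0
          · exact hcol _
        · exact hc1
    · push_neg at hA
      refine ⟨a i, a i, Or.inl rfl, ?_⟩
      intro x hxS hxd
      have h2 := hA x hxS
      omega
  -- choose the special endpoints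
  choose w0 d0 hw0 hred0 using claimB
  have hQpos : 0 < 5*m - ν := by omega
  have hQS : 5*m - ν ≤ S.card := by omega
  obtain ⟨S', hS'sub, hS'card⟩ := Finset.exists_subset_card_eq hQS
  set ρ : ℕ → Fin (5*m+n-1) := fun q =>
    if h : q < 5*m - ν then ((S'.orderIsoOfFin hS'card) ⟨q, h⟩ : Fin (5*m+n-1))
    else ((S'.orderIsoOfFin hS'card) ⟨0, hQpos⟩ : Fin (5*m+n-1)) with hρdef
  have hρS : ∀ q, q < 5*m - ν → ρ q ∈ S := by
    intro q hq
    simp only [hρdef]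
    rw [dif_pos hq]
    exact hS'sub (Finset.coe_mem _)
  have hρinj : ∀ q q', q < 5*m - ν → q' < 5*m - ν → ρ q = ρ q' → q = q' := by
    intro q q' hq hq' h
    simp only [hρdef] at h
    rw [dif_pos hq, dif_pos hq'] at h
    have := (S'.orderIsoOfFin hS'card).injective (Subtype.coe_injective h)
    exact congrArg Fin.val this
  set w' : ℕ → Fin (5*m+n-1) := fun i => if h : i < ν then w0 ⟨i, h⟩ else ρ 0 with hw'def
  set d' : ℕ → Fin (5*m+n-1) := fun i => if h : i < ν then d0 ⟨i, h⟩ else ρ 0 with hd'def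
  have hw'S : ∀ i, i < ν → w' i ∉ S := by
    intro i hi hmem
    simp only [hw'def] at hmem
    rw [dif_pos hi] at hmem
    rcases hw0 ⟨i, hi⟩ with h | h
    · exact (((hSmem _).mp hmem ⟨i, hi⟩).1) h
    · exact (((hSmem _).mp hmem ⟨i, hi⟩).2) h
  have hw'inj : ∀ i j, i < ν → j < ν → w' i = w' j → i = j := by
    intro i j hi hj h
    simp only [hw'def] at h
    rw [dif_pos hi, dif_pos hj] at h
    rcases hw0 ⟨i, hi⟩ with h1 | h1 <;> rcases hw0 ⟨j, hj⟩ with h2 | h2 <;>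
      rw [h1, h2] at h
    · exact congrArg Fin.val (ha h)
    · exact absurd h (hab _ _)
    · exact absurd h.symm (hab _ _)
    · exact congrArg Fin.val (hb h)
  have hw'red : ∀ i, i < ν → ∀ x ∈ S, x ≠ d' i → c s(w' i, x) = 0 := by
    intro i hi x hx hxd
    simp only [hw'def]
    rw [dif_pos hi]
    refine hred0 ⟨i, hi⟩ x hx ?_
    simp only [hd'def] at hxd
    rw [dif_pos hi] at hxd
    exact hxd
  -- the block permutations putting the bad vertex in the middle
  set tt : ℕ → ℕ → ℕ := fun i o =>
    if h : ∃ k : Fin 4, ρ (4*i + (k : ℕ)) = d' i then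
      (if ho : o < 4 then ((Equiv.swap (1 : Fin 4) h.choose) ⟨o, ho⟩ : Fin 4).val else o)
    else o with httdef
  have htt4 : ∀ i o, o < 4 → tt i o < 4 := by
    intro i o ho
    simp only [httdef]
    by_cases h : ∃ k : Fin 4, ρ (4*i + (k : ℕ)) = d' i
    · rw [dif_pos h, dif_pos ho]
      exact ((Equiv.swap (1:Fin 4) h.choose) ⟨o, ho⟩).isLt
    · rw [dif_neg h]; exact ho
  have htt_inj : ∀ i o o', o < 4 → o' < 4 → tt i o = tt i o' → o = o' := by
    intro i o o' ho ho' h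
    simp only [httdef] at h
    by_cases hc : ∃ k : Fin 4, ρ (4*i + (k : ℕ)) = d' i
    · rw [dif_pos hc, dif_pos hc, dif_pos ho, dif_pos ho'] at h
      have := (Equiv.swap (1:Fin 4) hc.choose).injective (Fin.ext h)
      exact congrArg Fin.val this
    · rw [dif_neg hc, dif_neg hc] at h; exact h
  have htt_good : ∀ i, i < ν → ∀ o, (o = 0 ∨ o = 3) → ρ (4*i + tt i o) ≠ d' i := by
    intro i hi o ho
    have ho4 : o < 4 := by omega
    simp only [httdef]
    by_cases h : ∃ k : Fin 4, ρ (4*i + (k : ℕ)) = d' i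
    · rw [dif_pos h, dif_pos ho4]
      intro hcon
      have hk := h.choose_spec
      have hb1 : 4*i + ((Equiv.swap (1:Fin 4) h.choose) ⟨o, ho4⟩ : Fin 4).val < 5*m - ν := by
        have := ((Equiv.swap (1:Fin 4) h.choose) ⟨o, ho4⟩).isLt; omega
      have hb2 : 4*i + (h.choose : ℕ) < 5*m - ν := by
        have := h.choose.isLt; omega
      have heq := hρinj _ _ hb1 hb2 (hcon.trans hk.symm)
      have heq2 : (Equiv.swap (1:Fin 4) h.choose) ⟨o, ho4⟩ = h.choose := Fin.ext (by omega)
      exact swap4_good h.choose ⟨o, ho4⟩ ho heq2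
    · rw [dif_neg h]
      intro hcon
      exact h ⟨⟨o, ho4⟩, hcon⟩
  -- index bounds
  have hidxm : ∀ i o, i < ν → o < 4 → 4*i + tt i o < 4*ν := by
    intro i o hi ho; have := htt4 i o ho; omega
  have h4ν : 4*ν ≤ 5*m - ν := by omega
  -- the vertex map
  set G : Fin m × Fin 5 → Fin (5*m+n-1) := fun x =>
    if h : (x.1 : ℕ) < ν then
      (if (x.2 : ℕ) = 0 then w' (x.1 : ℕ) else ρ (4 * (x.1 : ℕ) + tt (x.1 : ℕ) ((x.2 : ℕ) - 1)))
    else ρ (4*ν + 5*((x.1 : ℕ) - ν) + (x.2 : ℕ)) with hGdef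
  have hne_wρ : ∀ i q, i < ν → q < 5*m - ν → w' i ≠ ρ q :=
    fun i q hi hq h => hw'S i hi (h ▸ hρS q hq)
  have hGinj : Function.Injective G := by
    rintro ⟨i, j⟩ ⟨i2, j2⟩ hg
    simp only [hGdef] at hg
    have hj5 := j.isLt; have hj25 := j2.isLt
    have him := i.isLt; have hi2m := i2.isLt
    by_cases hi : (i : ℕ) < ν
    · rw [dif_pos hi] at hg
      by_cases hi2 : (i2 : ℕ) < ν
      · rw [dif_pos hi2] at hg
        by_cases hj : (j : ℕ) = 0
        · rw [if_pos hj] at hg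
          by_cases hj2 : (j2 : ℕ) = 0
          · rw [if_pos hj2] at hg
            exact Prod.ext (Fin.ext (hw'inj _ _ hi hi2 hg))
              (Fin.ext (show (j : ℕ) = (j2 : ℕ) by omega))
          · rw [if_neg hj2] at hg
            exact absurd hg (hne_wρ _ _ hi
              (by have := htt4 (i2 : ℕ) ((j2 : ℕ) - 1) (by omega); omega))
        · rw [if_neg hj] at hg
          by_cases hj2 : (j2 : ℕ) = 0
          · rw [if_pos hj2] at hg
            exact absurd hg.symm (hne_wρ _ _ hi2
              (by have := htt4 (i : ℕ) ((j : ℕ) - 1) (by omega); omega))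
          · rw [if_neg hj2] at hg
            have t1 := htt4 (i : ℕ) ((j : ℕ) - 1) (by omega)
            have t2 := htt4 (i2 : ℕ) ((j2 : ℕ) - 1) (by omega)
            have heq := hρinj _ _ (by omega) (by omega) hg
            have hii : (i : ℕ) = (i2 : ℕ) := by omega
            have htteq : tt (i : ℕ) ((j : ℕ) - 1) = tt (i2 : ℕ) ((j2 : ℕ) - 1) := by omega
            rw [← hii] at htteq
            have := htt_inj (i : ℕ) _ _ (by omega) (by omega) htteq
            exact Prod.ext (Fin.ext hii) (Fin.ext (show (j : ℕ) = (j2 : ℕ) by omega))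
      · rw [dif_neg hi2] at hg
        by_cases hj : (j : ℕ) = 0
        · rw [if_pos hj] at hg
          exact absurd hg (hne_wρ _ _ hi (by omega))
        · rw [if_neg hj] at hg
          have t1 := htt4 (i : ℕ) ((j : ℕ) - 1) (by omega)
          have heq := hρinj _ _ (by omega) (by omega) hg
          exact absurd heq (by omega)
    · rw [dif_neg hi] at hg
      by_cases hi2 : (i2 : ℕ) < ν
      · rw [dif_pos hi2] at hg
        by_cases hj2 : (j2 : ℕ) = 0
        · rw [if_pos hj2] at hg
          exact absurd hg.symm (hne_wρ _ _ hi2 (by omega))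
        · rw [if_neg hj2] at hg
          have t2 := htt4 (i2 : ℕ) ((j2 : ℕ) - 1) (by omega)
          have heq := hρinj _ _ (by omega) (by omega) hg
          exact absurd heq (by omega)
      · rw [dif_neg hi2] at hg
        have heq := hρinj _ _ (by omega) (by omega) hg
        exact Prod.ext (Fin.ext (show (i : ℕ) = (i2 : ℕ) by omega))
          (Fin.ext (show (j : ℕ) = (j2 : ℕ) by omega))
  refine ⟨⟨G, hGinj⟩, ?_, ?_⟩
  · rintro ⟨i, j⟩ ⟨i2, j2⟩ ⟨hii, hadj⟩
    simp only at hii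
    subst hii
    have hne : j ≠ j2 := hadj.ne
    have hj5 := j.isLt; have hj25 := j2.isLt
    have him := i.isLt
    simp only [Function.Embedding.coeFn_mk, hGdef]
    by_cases hi : (i : ℕ) < ν
    · rw [dif_pos hi, dif_pos hi]
      by_cases hj : (j : ℕ) = 0
      · rw [if_pos hj]
        have hj2' : (j2 : ℕ) = 1 ∨ (j2 : ℕ) = 4 := cyc5_class j j2 hadj hj
        rw [if_neg (by omega)]
        exact hw'red _ hi _
          (hρS _ (by have := htt4 (i : ℕ) ((j2 : ℕ) - 1) (by omega); omega))
          (htt_good _ hi ((j2 : ℕ) - 1) (by omega))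
      · by_cases hj2 : (j2 : ℕ) = 0
        · rw [if_pos hj2, if_neg hj, Sym2.eq_swap]
          have hj' : (j : ℕ) = 1 ∨ (j : ℕ) = 4 := cyc5_class j2 j hadj.symm hj2
          exact hw'red _ hi _
            (hρS _ (by have := htt4 (i : ℕ) ((j : ℕ) - 1) (by omega); omega))
            (htt_good _ hi ((j : ℕ) - 1) (by omega))
        · rw [if_neg hj, if_neg hj2]
          have t1 := htt4 (i : ℕ) ((j : ℕ) - 1) (by omega)
          have t2 := htt4 (i : ℕ) ((j2 : ℕ) - 1) (by omega)
          refine claimA _ (hρS _ (by omega)) _ (hρS _ (by omega)) ?_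
          intro h
          have heq := hρinj _ _ (by omega) (by omega) h
          have := htt_inj (i : ℕ) ((j : ℕ) - 1) ((j2 : ℕ) - 1) (by omega) (by omega) (by omega)
          exact hne (Fin.ext (by omega))
    · rw [dif_neg hi, dif_neg hi]
      refine claimA _ (hρS _ (by omega)) _ (hρS _ (by omega)) ?_
      intro h
      have heq := hρinj _ _ (by omega) (by omega) h
      exact hne (Fin.ext (by omega))
  · have hreachρ : ∀ q, q < 5*m - ν → (colorGraph c 0).Reachable (ρ q) (ρ 0) := by
      intro q hq
      by_cases h0 : ρ q = ρ 0
      · rw [h0]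
      · refine SimpleGraph.Adj.reachable ?_
        simp only [colorGraph, SimpleGraph.fromEdgeSet_adj, Set.mem_setOf_eq]
        refine ⟨⟨claimA _ (hρS q hq) _ (hρS 0 hQpos) h0, ?_⟩, h0⟩
        rw [Sym2.mk_isDiag_iff]; exact h0
    intro u v
    have key : ∀ x : Fin m × Fin 5,
        (colorGraph c 0).Reachable ((⟨G, hGinj⟩ : Fin m × Fin 5 ↪ Fin (5*m+n-1)) x) (ρ 0) := by
      rintro ⟨i, j⟩
      have hj5 := j.isLt; have him := i.isLt
      simp only [Function.Embedding.coeFn_mk, hGdef]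
      by_cases hi : (i : ℕ) < ν
      · rw [dif_pos hi]
        by_cases hj : (j : ℕ) = 0
        · rw [if_pos hj]
          have b1 : 4*(i : ℕ) + tt (i : ℕ) 0 < 5*m - ν := by
            have := htt4 (i : ℕ) 0 (by omega); omega
          refine SimpleGraph.Reachable.trans (SimpleGraph.Adj.reachable ?_) (hreachρ _ b1)
          simp only [colorGraph, SimpleGraph.fromEdgeSet_adj, Set.mem_setOf_eq]
          have hwρ : w' (i : ℕ) ≠ ρ (4*(i : ℕ) + tt (i : ℕ) 0) := hne_wρ _ _ hi b1
          refine ⟨⟨hw'red _ hi _ (hρS _ b1) (htt_good _ hi 0 (Or.inl rfl)), ?_⟩, hwρ⟩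
          rw [Sym2.mk_isDiag_iff]; exact hwρ
        · rw [if_neg hj]
          exact hreachρ _ (by have := htt4 (i : ℕ) ((j : ℕ) - 1) (by omega); omega)
      · rw [dif_neg hi]
        exact hreachρ _ (by omega)
    exact (key u).trans (key v).symm


/-- `R(𝒞(mC₅), nK₂) = 5m + n − 1` for `m ≥ n ≥ 1`. -/
theorem stmt7 (m n : ℕ) (hn : 1 ≤ n) (hmn : n ≤ m) :
    ramseyConnPair (nCopies m (SimpleGraph.cycleGraph 5))
      (nCopies n (SimpleGraph.pathGraph 2)) = 5 * m + n - 1 := by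
  classical
  have hmem : (5*m+n-1) ∈ {N | ∀ c : Sym2 (Fin N) → Fin 2,
      hasConnCopyInColor (nCopies m (SimpleGraph.cycleGraph 5)) c 0 ∨
      hasCopyInColor (nCopies n (SimpleGraph.pathGraph 2)) c 1} := by
    intro c
    by_cases h : Mtch c n
    · exact Or.inr ((mtch_iff_copy c).mp h)
    · exact Or.inl (red_side m n hn hmn c h)
  rw [ramseyConnPair]
  refine le_antisymm (Nat.sInf_le hmem) (le_csInf ⟨_, hmem⟩ ?_)
  intro k hk
  by_contra hcon
  push_neg at hcon
  have hkle : k ≤ 5*m+n-2 := by omega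
  set e : Fin k → Fin (5*m+n-2) := Fin.castLE hkle with hedef
  have einj : Function.Injective e := Fin.castLE_injective hkle
  have hkk := hk (fun s => cbad m n (s.map e))
  rcases hkk with ⟨f, hcolr, hreach⟩ | ⟨f, hcolb⟩
  · apply cbad_no_red m n hn (le_trans hn hmn)
    refine ⟨⟨fun x => e (f x), fun x y h => f.injective (einj h)⟩, ?_, ?_⟩
    · intro u v huv
      have h2 : cbad m n (Sym2.map e s(f u, f v)) = 0 := hcolr u v huv
      rw [Sym2.map_pair_eq] at h2
      exact h2
    · intro u v
      have hadjmap : ∀ x y : Fin k, (colorGraph (fun s => cbad m n (s.map e)) 0).Adj x y →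
          (colorGraph (cbad m n) 0).Adj (e x) (e y) := by
        intro x y hxy
        simp only [colorGraph, SimpleGraph.fromEdgeSet_adj, Set.mem_setOf_eq] at hxy ⊢
        obtain ⟨⟨h1, h2⟩, h3⟩ := hxy
        have h1' : cbad m n (Sym2.map e s(x, y)) = 0 := h1
        rw [Sym2.map_pair_eq] at h1'
        refine ⟨⟨h1', ?_⟩, fun hc => h3 (einj hc)⟩
        rw [Sym2.mk_isDiag_iff]; exact fun hc => h3 (einj hc)
      exact SimpleGraph.Reachable.map
        (⟨e, fun {x y} h => hadjmap x y h⟩ :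
          colorGraph (fun s => cbad m n (s.map e)) 0 →g colorGraph (cbad m n) 0)
        (hreach u v)
  · apply cbad_no_blue m n hn
    refine ⟨⟨fun x => e (f x), fun x y h => f.injective (einj h)⟩, ?_⟩
    intro u v huv
    have h2 : cbad m n (Sym2.map e s(f u, f v)) = 1 := hcolb u v huv
    rw [Sym2.map_pair_eq] at h2
    exact h2

end Aux
end

section
/- For every m ≥ 2, R_3(mC_5) ≥ 11m − 2: there is a 3-coloring of the edges of K_{11m-3} with no monochromatic copy of m disjoint 5-cycles. -/
open SimpleGraph

section Aux
open Finset

def cliqueOn {n : ℕ} (c : Sym2 (Fin n) → Fin 3) (i : Fin 3) (S : Finset (Fin n)) : Prop :=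
  ∀ u ∈ S, ∀ v ∈ S, u ≠ v → c s(u, v) = i

lemma ramsey3_aux : ∀ (N : ℕ) (s : Fin 3 → ℕ), s 0 + s 1 + s 2 = N →
    ∃ n : ℕ, ∀ c : Sym2 (Fin n) → Fin 3, ∃ i S, cliqueOn c i S ∧ s i ≤ S.card := by
  intro N
  induction N using Nat.strong_induction_on with
  | _ N ih =>
    intro s hs
    by_cases hz : ∃ i, s i = 0
    · obtain ⟨i, hi⟩ := hz
      exact ⟨0, fun c => ⟨i, ∅, fun u hu => absurd hu (by simp), by simp [hi]⟩⟩
    push_neg at hz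
    have hpos : ∀ i, 1 ≤ s i := fun i => Nat.one_le_iff_ne_zero.2 (hz i)
    have H : ∀ i : Fin 3, ∃ n : ℕ, ∀ c : Sym2 (Fin n) → Fin 3,
        ∃ j S, cliqueOn c j S ∧ Function.update s i (s i - 1) j ≤ S.card := by
      intro i
      apply ih (Function.update s i (s i - 1) 0 + Function.update s i (s i - 1) 1 +
        Function.update s i (s i - 1) 2) _ _ rfl
      have h0 := hpos 0; have h1 := hpos 1; have h2 := hpos 2
      fin_cases i <;> simp [Function.update] <;> omega
    choose n hn using H
    refine ⟨n 0 + n 1 + n 2 + 1, fun c => ?_⟩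
    set v0 : Fin (n 0 + n 1 + n 2 + 1) := ⟨n 0 + n 1 + n 2, by omega⟩ with hv0
    set B : Fin 3 → Finset (Fin (n 0 + n 1 + n 2 + 1)) := fun (i : Fin 3) =>
      (Finset.univ.erase v0).filter (fun u => c s(v0, u) = i) with hB
    have hsum : (Finset.univ.erase v0).card = ∑ i : Fin 3, (B i).card :=
      Finset.card_eq_sum_card_fiberwise (fun x _ => Finset.mem_univ _)
    have hcard : (Finset.univ.erase v0).card = n 0 + n 1 + n 2 := by
      simp
    have hex : ∃ i, n i ≤ (B i).card := by
      by_contra h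
      push_neg at h
      have h0 := h 0; have h1 := h 1; have h2 := h 2
      rw [hcard, Fin.sum_univ_three] at hsum
      omega
    obtain ⟨i, hi⟩ := hex
    obtain ⟨T, hTB, hTcard⟩ := Finset.exists_subset_card_eq hi
    set g : Fin (n i) → Fin (n 0 + n 1 + n 2 + 1) := fun a => ((T.orderIsoOfFin hTcard) a : Fin (n 0 + n 1 + n 2 + 1)) with hg
    have ginj : Function.Injective g := fun a b h =>
      (T.orderIsoOfFin hTcard).injective (Subtype.ext h)
    have gmem : ∀ a, g a ∈ B i := fun a => hTB ((T.orderIsoOfFin hTcard) a).2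
    obtain ⟨j, S', hS'cl, hS'card⟩ := hn i (fun e => c (Sym2.map g e))
    set S : Finset (Fin (n 0 + n 1 + n 2 + 1)) := S'.image g with hS
    have hScard : S.card = S'.card := Finset.card_image_of_injective _ ginj
    have hScl : cliqueOn c j S := by
      intro u hu v hv huv
      obtain ⟨a, ha, rfl⟩ := Finset.mem_image.1 hu
      obtain ⟨b, hb, rfl⟩ := Finset.mem_image.1 hv
      have hab : a ≠ b := fun h => huv (by rw [h])
      have := hS'cl a ha b hb hab
      simpa only [Sym2.map_pair_eq] using this
    have hSB : ∀ u ∈ S, u ∈ B i := by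
      intro u hu
      obtain ⟨a, _, rfl⟩ := Finset.mem_image.1 hu
      exact gmem a
    by_cases hji : j = i
    · subst hji
      have hupd : Function.update s j (s j - 1) j = s j - 1 := Function.update_self _ _ _
      rw [hupd] at hS'card
      refine ⟨j, insert v0 S, ?_, ?_⟩
      · intro u hu v hv huv
        rcases Finset.mem_insert.1 hu with rfl | hu' <;>
          rcases Finset.mem_insert.1 hv with h | hv'
        · exact absurd h.symm huv
        · exact (Finset.mem_filter.1 (hSB v hv')).2
        · subst h
          rw [Sym2.eq_swap]
          exact (Finset.mem_filter.1 (hSB u hu')).2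
        · exact hScl u hu' v hv' huv
      · have hv0S : v0 ∉ S := fun h =>
          (Finset.mem_erase.1 (Finset.mem_filter.1 (hSB v0 h)).1).1 rfl
        rw [Finset.card_insert_of_notMem hv0S]
        have := hpos j
        omega
    · have hupd : Function.update s i (s i - 1) j = s j := Function.update_of_ne hji _ _
      rw [hupd] at hS'card
      exact ⟨j, S, hScl, by omega⟩
def myF (m a b : ℕ) : Fin 3 :=
  if b < 5*m-1 then 0 else if 5*m-1 ≤ a ∧ b < 10*m-2 then 1 else 2

def myCol (m N : ℕ) : Sym2 (Fin N) → Fin 3 :=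
  Sym2.lift ⟨fun x y => myF m (min x.1 y.1) (max x.1 y.1), by
    intro x y; simp [min_comm, max_comm]⟩

lemma myCol_eq {m N : ℕ} (x y : Fin N) :
    myCol m N s(x, y) = myF m (min x.1 y.1) (max x.1 y.1) := rfl



lemma adj_succ : ∀ j : Fin 5, (cycleGraph 5).Adj j (j + 1) := by decide

lemma noMono (m : ℕ) (hm : 2 ≤ m) :
    ¬ hasMonoCopy (nCopies m (SimpleGraph.cycleGraph 5)) (myCol m (11*m-3)) := by
  rintro ⟨i, f, hf⟩
  have hC : ∀ (k : Fin m) (j j' : Fin 5), (cycleGraph 5).Adj j j' →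
      myF m (min (f (k, j)).1 (f (k, j')).1) (max (f (k, j)).1 (f (k, j')).1) = i :=
    fun k j j' h => hf (k, j) (k, j') ⟨rfl, h⟩
  have hfin : ∀ p : Fin m × Fin 5, (f p).1 < 11*m-3 := fun p => (f p).2
  fin_cases i
  · -- color 0 : all vertices in A
    have hA : ∀ p : Fin m × Fin 5, (f p).1 < 5*m-1 := by
      rintro ⟨k, j⟩
      have h := hC k j (j+1) (adj_succ j)
      unfold myF at h
      split_ifs at h with h1 h2
      · omega
      · exact absurd h (by decide)
      · exact absurd h (by decide)
    have hinj : Function.Injective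
        (fun p : Fin m × Fin 5 => (⟨(f p).1, hA p⟩ : Fin (5*m-1))) := by
      intro p q h
      apply f.injective
      apply Fin.ext
      simpa using h
    have := Fintype.card_le_of_injective _ hinj
    simp at this
    omega
  · -- color 1 : all vertices in B
    have hB : ∀ p : Fin m × Fin 5, 5*m-1 ≤ (f p).1 ∧ (f p).1 < 10*m-2 := by
      rintro ⟨k, j⟩
      have h := hC k j (j+1) (adj_succ j)
      unfold myF at h
      split_ifs at h with h1 h2
      · exact absurd h (by decide)
      · omega
      · exact absurd h (by decide)
    have hinj : Function.Injective
        (fun p : Fin m × Fin 5 =>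
          (⟨(f p).1 - (5*m-1), by have := (hB p).2; omega⟩ : Fin (5*m-1))) := by
      intro p q h
      apply f.injective
      apply Fin.ext
      have hp := (hB p).1; have hq := (hB q).1
      have := congrArg Fin.val h
      simp only [] at this
      omega
    have := Fintype.card_le_of_injective _ hinj
    simp at this
    omega
  · -- color 2 : each copy needs a vertex in C
    have hkey : ∀ k : Fin m, ∃ j : Fin 5, 10*m-2 ≤ (f (k, j)).1 := by
      intro k
      by_contra h
      push_neg at h
      set a : Fin 5 → ℕ := fun j => if (f (k, j)).1 < 5*m-1 then 0 else 1 with ha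
      have hedge : ∀ j j' : Fin 5, (cycleGraph 5).Adj j j' → a j ≠ a j' := by
        intro j j' hadj
        have hcol := hC k j j' hadj
        have hj := h j; have hj' := h j'
        unfold myF at hcol
        split_ifs at hcol with h1 h2
        · exact absurd hcol (by decide)
        · exact absurd hcol (by decide)
        · simp only [ha]
          split_ifs with hx hy hy <;> omega
      have hb : ∀ j, a j ≤ 1 := fun j => by
        simp only [ha]; split_ifs <;> omega
      have e01 := hedge 0 1 (by decide)
      have e12 := hedge 1 2 (by decide)
      have e23 := hedge 2 3 (by decide)
      have e34 := hedge 3 4 (by decide)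
      have e40 := hedge 4 0 (by decide)
      have b0 := hb 0; have b1 := hb 1; have b2 := hb 2
      have b3 := hb 3; have b4 := hb 4
      omega
    choose jf hjf using hkey
    have hinj : Function.Injective
        (fun k : Fin m =>
          (⟨(f (k, jf k)).1 - (10*m-2), by
            have := hfin (k, jf k); have := hjf k; omega⟩ : Fin (m-1))) := by
      intro p q hpq
      have h1 := hjf p; have h2 := hjf q
      have := congrArg Fin.val hpq
      simp only [] at this
      have heq : (f (p, jf p)).1 = (f (q, jf q)).1 := by omega
      have h3 := f.injective (Fin.ext heq)
      exact congrArg Prod.fst h3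
    have := Fintype.card_le_of_injective _ hinj
    simp at this
    omega

lemma mono_of_clique {n m : ℕ} (hm : 1 ≤ m) (c : Sym2 (Fin n) → Fin 3) (i : Fin 3)
    (S : Finset (Fin n)) (hcl : cliqueOn c i S) (hcard : 5*m ≤ S.card) :
    hasMonoCopy (nCopies m (SimpleGraph.cycleGraph 5)) c := by
  obtain ⟨T, hTS, hT⟩ := Finset.exists_subset_card_eq hcard
  set g : Fin (5*m) → Fin n := fun a => ((T.orderIsoOfFin hT) a : Fin n) with hg
  have ginj : Function.Injective g := fun a b h =>
    (T.orderIsoOfFin hT).injective (Subtype.ext h)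
  have gmem : ∀ a, g a ∈ S := fun a => hTS ((T.orderIsoOfFin hT) a).2
  have hidx : ∀ p : Fin m × Fin 5, p.1.1 * 5 + p.2.1 < 5*m := by
    rintro ⟨k, j⟩
    have := k.2; have := j.2
    simp only []
    omega
  set F : Fin m × Fin 5 → Fin n := fun p => g ⟨p.1.1 * 5 + p.2.1, hidx p⟩ with hF
  have Finj : Function.Injective F := by
    intro p q h
    have h2 := ginj h
    have h3 := congrArg Fin.val h2
    simp only [] at h3
    have hp2 := p.2.2; have hq2 := q.2.2
    have : p.1.1 = q.1.1 ∧ p.2.1 = q.2.1 := by omega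
    exact Prod.ext (Fin.ext this.1) (Fin.ext this.2)
  refine ⟨i, ⟨F, Finj⟩, ?_⟩
  intro u v hadj
  obtain ⟨h1, h2⟩ := hadj
  have hne : u ≠ v := fun h => h2.ne (congrArg Prod.snd h)
  exact hcl (F u) (gmem _) (F v) (gmem _) (fun h => hne (Finj h))

end Aux

/-- `R₃(mC₅) ≥ 11m − 2` for `m ≥ 2`: there is a 3-coloring of `K_{11m−3}` with no
monochromatic `mC₅`. -/
theorem stmt9 (m : ℕ) (hm : 2 ≤ m) :
    11 * m - 2 ≤ ramsey (nCopies m (SimpleGraph.cycleGraph 5)) 3 ∧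
    ∃ c : Sym2 (Fin (11 * m - 3)) → Fin 3,
      ¬ hasMonoCopy (nCopies m (SimpleGraph.cycleGraph 5)) c := by
  have hno := noMono m hm
  constructor
  · apply le_csInf
    · obtain ⟨n, hn⟩ := ramsey3_aux ((5*m) + (5*m) + (5*m)) (fun _ => 5*m) rfl
      refine ⟨n, fun c => ?_⟩
      obtain ⟨i, S, hcl, hcard⟩ := hn c
      exact mono_of_clique (by omega) c i S hcl hcard
    · intro n hn
      by_contra hlt
      push_neg at hlt
      have hle : n ≤ 11*m - 3 := by omega
      obtain ⟨i, f, hf⟩ := hn (fun e => myCol m (11*m-3) (Sym2.map (Fin.castLE hle) e))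
      refine hno ⟨i, f.trans (Fin.castLEEmb hle), fun u v h => ?_⟩
      simpa [Sym2.map_pair_eq, Fin.castLEEmb] using hf u v h
  · exact ⟨myCol m (11*m-3), hno⟩
end

section
/- Let G be a connected graph with chromatic number χ(G) ≥ 4. Then R_2(C(2G)) ≤ (χ(G)−1)(R_2(G)−1) + 2s(G), where C(2G) is the family of connected graphs containing two vertex-disjoint copies of G, and s(G) is the minimum size of a color class over all proper vertex colorings of G with χ(G) colors. -/
open SimpleGraph

/-! ### Auxiliary lemmas for `stmt15` -/

private lemma fin2_eq_one' {i : Fin 2} (h : i ≠ 0) : i = 1 := by fin_cases i <;> simp_all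

private lemma fin2_other {i b w : Fin 2} (hbw : w ≠ b) (hi : i ≠ w) : i = b := by
  have h1 := i.2
  have h2 := b.2
  have h3 := w.2
  have h4 : i.1 ≠ w.1 := fun h => hi (Fin.ext h)
  have h5 : w.1 ≠ b.1 := fun h => hbw (Fin.ext h)
  exact Fin.ext (by omega)

private lemma ramsey_clique'' : ∀ (k p q : ℕ), p + q ≤ k →
    ∃ n : ℕ, ∀ (N : ℕ) (c : Sym2 (Fin N) → Fin 2) (T : Finset (Fin N)), n ≤ T.card →
      ∃ S ⊆ T, (S.card = p ∧ ∀ u ∈ S, ∀ v ∈ S, u ≠ v → c s(u, v) = 0) ∨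
        (S.card = q ∧ ∀ u ∈ S, ∀ v ∈ S, u ≠ v → c s(u, v) = 1) := by
  intro k
  induction k with
  | zero =>
    intro p q hpq
    refine ⟨0, fun N c T _ => ⟨∅, Finset.empty_subset _, Or.inl ⟨by simp; omega, by simp⟩⟩⟩
  | succ k ih =>
    intro p q hpq
    match p, q with
    | 0, q =>
      exact ⟨0, fun N c T _ => ⟨∅, Finset.empty_subset _, Or.inl ⟨by simp, by simp⟩⟩⟩
    | p + 1, 0 =>
      exact ⟨0, fun N c T _ => ⟨∅, Finset.empty_subset _, Or.inr ⟨by simp, by simp⟩⟩⟩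
    | p + 1, q + 1 =>
      obtain ⟨n₁, h₁⟩ := ih p (q + 1) (by omega)
      obtain ⟨n₂, h₂⟩ := ih (p + 1) q (by omega)
      refine ⟨n₁ + n₂ + 1, fun N c T hT => ?_⟩
      have hTne : ∃ x, x ∈ T := Finset.Nonempty.exists_mem (Finset.card_pos.mp (by omega))
      obtain ⟨x, hx⟩ := hTne
      classical
      set A := (T.erase x).filter (fun y => c s(x, y) = 0) with hA
      set B := (T.erase x).filter (fun y => ¬ c s(x, y) = 0) with hB
      have hABcard : A.card + B.card = (T.erase x).card :=
        Finset.card_filter_add_card_filter_not _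
      have hec : (T.erase x).card = T.card - 1 := Finset.card_erase_of_mem hx
      have hcases : n₁ ≤ A.card ∨ n₂ ≤ B.card := by omega
      rcases hcases with hc | hc
      · obtain ⟨S, hS, hS2⟩ := h₁ N c A hc
        have hSA : ∀ y ∈ S, y ∈ A := fun y hy => hS hy
        have hSsubT : S ⊆ T := fun y hy =>
          Finset.mem_of_mem_erase (Finset.mem_of_mem_filter _ (hSA y hy))
        rcases hS2 with ⟨hcard, hmono⟩ | ⟨hcard, hmono⟩
        · refine ⟨insert x S, ?_, Or.inl ⟨?_, ?_⟩⟩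
          · exact Finset.insert_subset hx hSsubT
          · have hxS : x ∉ S := fun hxs =>
              (Finset.notMem_erase x T) (Finset.mem_of_mem_filter _ (hSA x hxs))
            rw [Finset.card_insert_of_notMem hxS, hcard]
          · intro u hu v hv huv
            rcases Finset.mem_insert.mp hu with rfl | hu'
            · rcases Finset.mem_insert.mp hv with rfl | hv'
              · exact absurd rfl huv
              · exact (Finset.mem_filter.mp (hSA v hv')).2
            · rcases Finset.mem_insert.mp hv with rfl | hv'
              · have := (Finset.mem_filter.mp (hSA u hu')).2
                rwa [Sym2.eq_swap] at this
              · exact hmono u hu' v hv' huv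
        · exact ⟨S, hSsubT, Or.inr ⟨hcard, hmono⟩⟩
      · obtain ⟨S, hS, hS2⟩ := h₂ N c B hc
        have hSB : ∀ y ∈ S, y ∈ B := fun y hy => hS hy
        have hSsubT : S ⊆ T := fun y hy =>
          Finset.mem_of_mem_erase (Finset.mem_of_mem_filter _ (hSB y hy))
        rcases hS2 with ⟨hcard, hmono⟩ | ⟨hcard, hmono⟩
        · exact ⟨S, hSsubT, Or.inl ⟨hcard, hmono⟩⟩
        · refine ⟨insert x S, ?_, Or.inr ⟨?_, ?_⟩⟩
          · exact Finset.insert_subset hx hSsubT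
          · have hxS : x ∉ S := fun hxs =>
              (Finset.notMem_erase x T) (Finset.mem_of_mem_filter _ (hSB x hxs))
            rw [Finset.card_insert_of_notMem hxS, hcard]
          · intro u hu v hv huv
            rcases Finset.mem_insert.mp hu with rfl | hu'
            · rcases Finset.mem_insert.mp hv with rfl | hv'
              · exact absurd rfl huv
              · exact fin2_eq_one' (Finset.mem_filter.mp (hSB v hv')).2
            · rcases Finset.mem_insert.mp hv with rfl | hv'
              · have := fin2_eq_one' (Finset.mem_filter.mp (hSB u hu')).2
                rwa [Sym2.eq_swap] at this
              · exact hmono u hu' v hv' huv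

section Aux
variable {V : Type*} [Fintype V] (G : SimpleGraph V)

private lemma ramseySet_nonempty' :
    {n | ∀ c : Sym2 (Fin n) → Fin 2, hasMonoCopy G c}.Nonempty := by
  classical
  set g := Fintype.card V with hg
  obtain ⟨n, hn⟩ := ramsey_clique'' (g + g) g g le_rfl
  refine ⟨n, fun c => ?_⟩
  obtain ⟨S, -, hS⟩ := hn n c Finset.univ (by simp)
  have key : ∀ (i : Fin 2), S.card = g → (∀ u ∈ S, ∀ v ∈ S, u ≠ v → c s(u, v) = i) →
      hasMonoCopy G c := by
    intro i hcard hmono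
    have e1 : V ≃ Fin g := Fintype.equivFin V
    have e2 : Fin g ≃o {x // x ∈ S} := S.orderIsoOfFin hcard
    have hinj : Function.Injective (fun v => ((e2 (e1 v)) : Fin n)) := by
      intro u v huv
      exact e1.injective (e2.injective (Subtype.ext huv))
    refine ⟨i, ⟨fun v => (e2 (e1 v) : Fin n), hinj⟩, ?_⟩
    intro u v huv
    exact hmono _ (e2 (e1 u)).2 _ (e2 (e1 v)).2
      (fun h => G.ne_of_adj huv (e1.injective (e2.injective (Subtype.ext h))))
  rcases hS with ⟨hcard, hmono⟩ | ⟨hcard, hmono⟩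
  · exact key 0 hcard hmono
  · exact key 1 hcard hmono

private lemma mono_in_subset' {N : ℕ} (c : Sym2 (Fin N) → Fin 2) (T : Finset (Fin N))
    (hT : ramsey G 2 ≤ T.card) :
    ∃ (i : Fin 2) (f : V ↪ Fin N), (∀ u v, G.Adj u v → c s(f u, f v) = i) ∧ ∀ v, f v ∈ T := by
  classical
  have hmem : ramsey G 2 ∈ {n | ∀ c : Sym2 (Fin n) → Fin 2, hasMonoCopy G c} :=
    Nat.sInf_mem (ramseySet_nonempty' G)
  obtain ⟨T', hT'sub, hT'card⟩ := Finset.exists_subset_card_eq hT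
  set φ := T'.orderIsoOfFin hT'card with hφ
  set c' : Sym2 (Fin (ramsey G 2)) → Fin 2 :=
    fun e => c (e.map (fun a => (φ a : Fin N))) with hc'
  obtain ⟨i, f₀, hf₀⟩ := hmem c'
  refine ⟨i, ⟨fun v => (φ (f₀ v) : Fin N), ?_⟩, ?_, ?_⟩
  · intro u v huv
    exact f₀.injective (φ.injective (Subtype.ext huv))
  · intro u v huv
    have := hf₀ u v huv
    simp only [hc', Sym2.map_pair_eq] at this
    exact this
  · intro v
    exact hT'sub (φ (f₀ v)).2

private lemma colorable_of_chrom' {r : ℕ} (hr : G.chromaticNumber = (r : ℕ∞)) :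
    G.Colorable r :=
  SimpleGraph.chromaticNumber_le_iff_colorable.mp (le_of_eq hr)

private lemma minClassSet_nonempty' {r : ℕ} (hr : G.chromaticNumber = (r : ℕ∞)) (hr1 : 1 ≤ r) :
    {n | ∃ (C : G.Coloring (Fin r)) (i : Fin r), n = Nat.card {v : V | C v = i}}.Nonempty := by
  obtain ⟨C⟩ := colorable_of_chrom' G hr
  exact ⟨_, C, ⟨0, hr1⟩, rfl⟩

private lemma minClass_le_class' {r : ℕ} (C : G.Coloring (Fin r)) (i : Fin r) :
    minClass G r ≤ Nat.card {v : V | C v = i} :=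
  Nat.sInf_le ⟨C, i, rfl⟩

private lemma r_le_card' {r : ℕ} (hr : G.chromaticNumber = (r : ℕ∞)) : r ≤ Fintype.card V := by
  have h : G.chromaticNumber ≤ Fintype.card V := SimpleGraph.chromaticNumber_le_card
  rw [hr] at h
  exact_mod_cast h

private lemma one_le_minClass' {r : ℕ} (hr : G.chromaticNumber = (r : ℕ∞)) (hr1 : 1 ≤ r) :
    1 ≤ minClass G r := by
  by_contra h
  have h0 : minClass G r = 0 := by omega
  have hmem := Nat.sInf_mem (minClassSet_nonempty' G hr hr1)
  rw [show sInf {n | ∃ (C : G.Coloring (Fin r)) (i : Fin r), n = Nat.card {v : V | C v = i}}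
      = minClass G r from rfl, h0] at hmem
  obtain ⟨C, i, hCi⟩ := hmem
  have hempty : IsEmpty {v : V | C v = i} := by
    rcases Nat.card_eq_zero.mp hCi.symm with h | h
    · exact h
    · exact absurd h (by
        have : Finite {v : V | C v = i} := Subtype.finite
        exact not_infinite_iff_finite.mpr this)
  have hne : ∀ v : V, C v ≠ i := by
    intro v hv
    exact hempty.elim ⟨v, hv⟩
  have hcol : G.Colorable (r - 1) := by
    refine ⟨SimpleGraph.Coloring.mk
      (fun v => ⟨if (C v).1 < i.1 then (C v).1 else (C v).1 - 1, ?_⟩) ?_⟩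
    · have h1 := (C v).2
      have h2 := i.2
      have h3 : (C v).1 ≠ i.1 := fun h => hne v (Fin.ext h)
      split <;> omega
    · intro u v huv hEq
      have hCuv : C u ≠ C v := C.valid huv
      have h1 : (C u).1 ≠ (C v).1 := fun h => hCuv (Fin.ext h)
      have h2 : (C u).1 ≠ i.1 := fun h => hne u (Fin.ext h)
      have h3 : (C v).1 ≠ i.1 := fun h => hne v (Fin.ext h)
      have h4 := congrArg Fin.val hEq
      simp only at h4
      split at h4 <;> split at h4 <;> omega
  have hle := hcol.chromaticNumber_le
  rw [hr] at hle
  have hle2 : r ≤ r - 1 := by exact_mod_cast hle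
  omega

private lemma minClass_lt_card' (hconn : G.Connected) {r : ℕ}
    (hr : G.chromaticNumber = (r : ℕ∞)) (hr2 : 2 ≤ r) :
    minClass G r + 1 ≤ Fintype.card V := by
  classical
  have hmem := Nat.sInf_mem (minClassSet_nonempty' G hr (by omega))
  obtain ⟨C, i, hCi⟩ := hmem
  have hcard2 : 2 ≤ Fintype.card V := le_trans hr2 (r_le_card' G hr)
  obtain ⟨u, v, huv⟩ := Fintype.exists_pair_of_one_lt_card (α := V) (by omega)
  obtain ⟨w⟩ := hconn.preconnected u v
  have hadj : ∃ a b : V, G.Adj a b := by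
    cases w with
    | nil => exact absurd rfl huv
    | cons h _ => exact ⟨_, _, h⟩
  obtain ⟨a, b, hab⟩ := hadj
  have hne : C a ≠ C b := C.valid hab
  have hout : ∃ x : V, C x ≠ i := by
    by_cases h : C a = i
    · exact ⟨b, fun hh => hne (h.trans hh.symm)⟩
    · exact ⟨a, h⟩
  obtain ⟨x, hx⟩ := hout
  have hlt : Fintype.card {v : V | C v = i} < Fintype.card V :=
    Fintype.card_subtype_lt (p := fun v => C v = i) hx
  have heq : Nat.card {v : V | C v = i} = Fintype.card {v : V | C v = i} :=
    Nat.card_eq_fintype_card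
  have hm : minClass G r = Nat.card {v : V | C v = i} := hCi
  omega

private lemma burr' (hconn : G.Connected) {r : ℕ}
    (hr : G.chromaticNumber = (r : ℕ∞)) (hr2 : 2 ≤ r) :
    (r - 1) * (Fintype.card V - 1) + minClass G r ≤ ramsey G 2 := by
  classical
  set g := Fintype.card V with hgdef
  set s := minClass G r with hsdef
  have hs1 : 1 ≤ s := one_le_minClass' G hr (by omega)
  have hsg : s + 1 ≤ g := minClass_lt_card' G hconn hr hr2
  have hrg : r ≤ g := r_le_card' G hr
  have hg2 : 2 ≤ g := le_trans hr2 hrg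
  have hVne : Nonempty V := hconn.nonempty
  refine le_csInf (ramseySet_nonempty' G) ?_
  intro m hm
  by_contra hlt
  push_neg at hlt
  have hpos : 0 < g - 1 := by omega
  have pf1 : ∀ x : ℕ, x < (r-1)*(g-1) → x / (g-1) < r := by
    intro x hx
    have : x / (g-1) < r - 1 := (Nat.div_lt_iff_lt_mul hpos).mpr hx
    omega
  set part : Fin m → Fin r := fun x =>
    if h : x.1 < (r-1)*(g-1) then ⟨x.1 / (g-1), pf1 x.1 h⟩ else ⟨r-1, by omega⟩ with hpart
  set c : Sym2 (Fin m) → Fin 2 :=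
    Sym2.lift ⟨fun a b => if part a = part b then (0 : Fin 2) else 1, by
      intro a b
      dsimp only
      by_cases h : part a = part b
      · rw [if_pos h, if_pos h.symm]
      · rw [if_neg h, if_neg (fun hh => h hh.symm)]⟩ with hc
  obtain ⟨i, f, hf⟩ := hm c
  have hcval : ∀ a b : Fin m, c s(a, b) = if part a = part b then (0 : Fin 2) else 1 := by
    intro a b; simp [hc]
  have fiber_low : ∀ (x : Fin m) (j : Fin r), part x = j → j.1 < r - 1 →
      j.1 * (g-1) ≤ x.1 ∧ x.1 < j.1 * (g-1) + (g-1) := by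
    intro x j hx hj
    by_cases h : x.1 < (r-1)*(g-1)
    · simp only [hpart, dif_pos h] at hx
      have hdiv : x.1 / (g-1) = j.1 := congrArg Fin.val hx
      constructor
      · calc j.1 * (g-1) = (g-1) * (x.1 / (g-1)) := by rw [hdiv, mul_comm]
          _ ≤ x.1 := Nat.mul_div_le x.1 (g-1)
      · have := Nat.lt_div_mul_add (a := x.1) hpos
        rw [hdiv] at this
        omega
    · simp only [hpart, dif_neg h] at hx
      have : j.1 = r - 1 := (congrArg Fin.val hx).symm
      omega
  have fiber_high : ∀ (x : Fin m) (j : Fin r), part x = j → j.1 = r - 1 →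
      (r-1)*(g-1) ≤ x.1 := by
    intro x j hx hj
    by_cases h : x.1 < (r-1)*(g-1)
    · simp only [hpart, dif_pos h] at hx
      have hdiv : x.1 / (g-1) = j.1 := congrArg Fin.val hx
      have : x.1 / (g-1) < r - 1 := (Nat.div_lt_iff_lt_mul hpos).mpr h
      omega
    · omega
  by_cases hi : i = 0
  · subst hi
    have hsame : ∀ u v : V, G.Adj u v → part (f u) = part (f v) := by
      intro u v huv
      have hval := hf u v huv
      rw [hcval] at hval
      by_contra hne
      rw [if_neg hne] at hval
      exact absurd hval (by decide)
    have hwalk : ∀ {a b : V}, G.Walk a b → part (f a) = part (f b) := by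
      intro a b w
      induction w with
      | nil => rfl
      | cons h _ ih => exact (hsame _ _ h).trans ih
    obtain ⟨v₀⟩ := hVne
    set j := part (f v₀) with hj
    have hconst : ∀ v : V, part (f v) = j := by
      intro v
      obtain ⟨w⟩ := hconn.preconnected v v₀
      exact hwalk w
    by_cases hjtop : j.1 = r - 1
    · have hinj : Function.Injective (fun v : V => (⟨(f v).1 - (r-1)*(g-1), by
          have h1 := fiber_high (f v) j (hconst v) hjtop
          have h2 := (f v).2
          omega⟩ : Fin (m - (r-1)*(g-1)))) := by
        intro u v huv
        have h1 := fiber_high (f u) j (hconst u) hjtop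
        have h2 := fiber_high (f v) j (hconst v) hjtop
        have h3 := congrArg Fin.val huv
        simp only at h3
        exact f.injective (Fin.ext (by omega))
      have hcard := Fintype.card_le_of_injective _ hinj
      rw [Fintype.card_fin] at hcard
      omega
    · have hjlt : j.1 < r - 1 := by have := j.2; omega
      have hinj : Function.Injective (fun v : V => (⟨(f v).1 - j.1*(g-1), by
          have h1 := fiber_low (f v) j (hconst v) hjlt
          omega⟩ : Fin (g-1))) := by
        intro u v huv
        have h1 := fiber_low (f u) j (hconst u) hjlt
        have h2 := fiber_low (f v) j (hconst v) hjlt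
        have h3 := congrArg Fin.val huv
        simp only at h3
        exact f.injective (Fin.ext (by omega))
      have hcard := Fintype.card_le_of_injective _ hinj
      rw [Fintype.card_fin] at hcard
      omega
  · have hi1 : i = 1 := fin2_eq_one' hi
    subst hi1
    have hproper : ∀ u v : V, G.Adj u v → part (f u) ≠ part (f v) := by
      intro u v huv heq
      have hval := hf u v huv
      rw [hcval, if_pos heq] at hval
      exact absurd hval (by decide)
    set C : G.Coloring (Fin r) :=
      SimpleGraph.Coloring.mk (fun v => part (f v)) (fun {u v} h => hproper u v h) with hC
    set j : Fin r := ⟨r-1, by omega⟩ with hjdef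
    have hle : s ≤ Nat.card {v : V | C v = j} := minClass_le_class' G C j
    have hmemj : ∀ v : {v : V | C v = j}, part (f v.1) = j := fun v => (v.2 : C v.1 = j)
    have hinj : Function.Injective (fun v : {v : V | C v = j} =>
        (⟨(f v.1).1 - (r-1)*(g-1), by
          have h1 := fiber_high (f v.1) j (hmemj v) rfl
          have h2 := (f v.1).2
          omega⟩ : Fin (m - (r-1)*(g-1)))) := by
      intro u v huv
      have h1 := fiber_high (f u.1) j (hmemj u) rfl
      have h2 := fiber_high (f v.1) j (hmemj v) rfl
      have h3 := congrArg Fin.val huv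
      simp only at h3
      exact Subtype.ext (f.injective (Fin.ext (by omega)))
    have hcard := Nat.card_le_card_of_injective _ hinj
    rw [Nat.card_eq_fintype_card (α := Fin (m - (r-1)*(g-1))), Fintype.card_fin] at hcard
    omega

end Aux

private lemma colorGraph_adj' {n : ℕ} {α : Type*} (c : Sym2 (Fin n) → α) (i : α) (u v : Fin n) :
    (colorGraph c i).Adj u v ↔ c s(u, v) = i ∧ u ≠ v := by
  simp only [colorGraph, SimpleGraph.fromEdgeSet_adj, Set.mem_setOf_eq, Sym2.isDiag_iff_proj_eq]
  constructor
  · rintro ⟨⟨h1, -⟩, h3⟩; exact ⟨h1, h3⟩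
  · rintro ⟨h1, h3⟩; exact ⟨⟨h1, h3⟩, h3⟩

private lemma exists_connected_color' {n : ℕ} (hn : 1 ≤ n) (c : Sym2 (Fin n) → Fin 2) :
    ∃ i : Fin 2, (colorGraph c i).Connected := by
  haveI : Nonempty (Fin n) := ⟨⟨0, hn⟩⟩
  by_cases h0 : (colorGraph c 0).Connected
  · exact ⟨0, h0⟩
  refine ⟨1, (SimpleGraph.connected_iff _).mpr ⟨?_, inferInstance⟩⟩
  rw [SimpleGraph.connected_iff] at h0
  push_neg at h0
  have hnp : ¬ (colorGraph c 0).Preconnected := fun h => (h0 h).false ⟨0, hn⟩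
  rw [SimpleGraph.Preconnected] at hnp
  push_neg at hnp
  obtain ⟨x, y, hxy⟩ := hnp
  have edge1 : ∀ u v : Fin n, u ≠ v → ¬ (colorGraph c 0).Reachable u v →
      (colorGraph c 1).Adj u v := by
    intro u v huv hnr
    have hc : c s(u, v) ≠ 0 := by
      intro h
      exact hnr ((colorGraph_adj' c 0 u v).mpr ⟨h, huv⟩).reachable
    exact (colorGraph_adj' c 1 u v).mpr ⟨fin2_eq_one' hc, huv⟩
  intro u v
  by_cases huv : u = v
  · subst huv; rfl
  by_cases hr0 : (colorGraph c 0).Reachable u v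
  · have hz : ∃ z, ¬ (colorGraph c 0).Reachable u z ∧ ¬ (colorGraph c 0).Reachable v z := by
      by_cases hx : (colorGraph c 0).Reachable u x
      · exact ⟨y, fun h => hxy (hx.symm.trans h), fun h => hxy (hx.symm.trans (hr0.trans h))⟩
      · exact ⟨x, hx, fun h => hx (hr0.trans h)⟩
    obtain ⟨z, hz1, hz2⟩ := hz
    have hzu : u ≠ z := fun h => hz1 (h ▸ SimpleGraph.Reachable.refl u)
    have hzv : v ≠ z := fun h => hz2 (h ▸ SimpleGraph.Reachable.refl v)
    exact ((edge1 u z hzu hz1).reachable).trans ((edge1 v z hzv hz2).reachable).symm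
  · exact (edge1 u v huv hr0).reachable

private lemma copy_reachable' {V : Type*} {G : SimpleGraph V} (hconn : G.Connected)
    {n : ℕ} {c : Sym2 (Fin n) → Fin 2} {i : Fin 2}
    (f : V ↪ Fin n) (hf : ∀ u v, G.Adj u v → c s(f u, f v) = i) :
    ∀ u v : V, (colorGraph c i).Reachable (f u) (f v) := by
  have key : ∀ {a b' : V}, G.Walk a b' → (colorGraph c i).Reachable (f a) (f b') := by
    intro a b' p
    induction p with
    | nil => exact SimpleGraph.Reachable.refl _
    | @cons x y z hxy p ih =>
        exact (((colorGraph_adj' c i (f x) (f y)).mpr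
          ⟨hf x y hxy, fun h => G.ne_of_adj hxy (f.injective h)⟩).reachable).trans ih
  intro u v
  obtain ⟨p⟩ := hconn.preconnected u v
  exact key p

private lemma two_copies' {V : Type*} {G : SimpleGraph V} {n : ℕ}
    {c : Sym2 (Fin n) → Fin 2} {i : Fin 2} (f₀ f₁ : V ↪ Fin n)
    (h₀ : ∀ u v, G.Adj u v → c s(f₀ u, f₀ v) = i)
    (h₁ : ∀ u v, G.Adj u v → c s(f₁ u, f₁ v) = i)
    (hdisj : ∀ u v, f₀ u ≠ f₁ v)
    (h00 : ∀ u v : V, (colorGraph c i).Reachable (f₀ u) (f₀ v))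
    (h11 : ∀ u v : V, (colorGraph c i).Reachable (f₁ u) (f₁ v))
    (h01 : ∀ u v : V, (colorGraph c i).Reachable (f₀ u) (f₁ v)) :
    hasConnCopyInColor (nCopies 2 G) c i := by
  classical
  have hinj : Function.Injective (fun p : Fin 2 × V => if p.1 = 0 then f₀ p.2 else f₁ p.2) := by
    intro p q hpq
    simp only at hpq
    by_cases hp : p.1 = 0 <;> by_cases hq : q.1 = 0
    · rw [if_pos hp, if_pos hq] at hpq
      exact Prod.ext (hp.trans hq.symm) (f₀.injective hpq)
    · rw [if_pos hp, if_neg hq] at hpq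
      exact absurd hpq (hdisj _ _)
    · rw [if_neg hp, if_pos hq] at hpq
      exact absurd hpq.symm (hdisj _ _)
    · rw [if_neg hp, if_neg hq] at hpq
      exact Prod.ext ((fin2_eq_one' hp).trans (fin2_eq_one' hq).symm) (f₁.injective hpq)
  refine ⟨⟨fun p => if p.1 = 0 then f₀ p.2 else f₁ p.2, hinj⟩, ?_, ?_⟩
  · rintro ⟨pa, ua⟩ ⟨pb, ub⟩ ⟨hpp, hadj⟩
    simp only [Function.Embedding.coeFn_mk] at hpp ⊢
    subst hpp
    by_cases hp : pa = 0
    · rw [if_pos hp, if_pos hp]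
      exact h₀ _ _ hadj
    · rw [if_neg hp, if_neg hp]
      exact h₁ _ _ hadj
  · rintro ⟨pa, ua⟩ ⟨pb, ub⟩
    simp only [Function.Embedding.coeFn_mk]
    by_cases hp : pa = 0 <;> by_cases hq : pb = 0
    · rw [if_pos hp, if_pos hq]; exact h00 _ _
    · rw [if_pos hp, if_neg hq]; exact h01 _ _
    · rw [if_neg hp, if_pos hq]; exact (h01 _ _).symm
    · rw [if_neg hp, if_neg hq]; exact h11 _ _

private lemma arith_main {r g s R : ℕ} (hr4 : 4 ≤ r) (hrg : r ≤ g) (hs1 : 1 ≤ s)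
    (hB : (r - 1) * (g - 1) + s ≤ R) :
    R + r * g ≤ (r - 1) * (R - 1) + 2 * s := by
  obtain ⟨a, rfl⟩ : ∃ a, r = a + 4 := ⟨r - 4, by omega⟩
  obtain ⟨d, rfl⟩ : ∃ d, g = a + 4 + d := ⟨g - (a + 4), by omega⟩
  obtain ⟨s', rfl⟩ : ∃ s', s = s' + 1 := ⟨s - 1, by omega⟩
  have h1 : a + 4 - 1 = a + 3 := by omega
  have h2 : a + 4 + d - 1 = a + 3 + d := by omega
  rw [h1, h2] at hB
  rw [h1]
  obtain ⟨e, hR⟩ : ∃ e, R = (a + 3) * (a + 3 + d) + s' + 1 + e := by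
    refine ⟨R - ((a + 3) * (a + 3 + d) + s' + 1), ?_⟩
    omega
  subst hR
  have h3 : (a + 3) * (a + 3 + d) + s' + 1 + e - 1 = (a + 3) * (a + 3 + d) + s' + e := by omega
  rw [h3]
  nlinarith [sq_nonneg a, Nat.zero_le a, Nat.zero_le d, Nat.zero_le s', Nat.zero_le e]

private lemma main_aux' {V : Type*} [Fintype V] (G : SimpleGraph V) (hconn : G.Connected)
    {N : ℕ} (c : Sym2 (Fin N) → Fin 2) (b w : Fin 2) (hbw : w ≠ b)
    (hb : (colorGraph c b).Connected)
    (r : ℕ) (hr : G.chromaticNumber = (r : ℕ∞)) (hr4 : 4 ≤ r)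
    (hR1 : 1 ≤ ramsey G 2)
    (hN : ramsey G 2 + r * Fintype.card V ≤ N) :
    hasMonoConnCopy (nCopies 2 G) c := by
  classical
  by_contra hno
  set R := ramsey G 2 with hRdef
  set g := Fintype.card V with hgdef
  have hVne : Nonempty V := hconn.nonempty
  have hg1 : 1 ≤ g := Fintype.card_pos
  have hembne : Nonempty (V ↪ Fin N) := by
    refine ⟨(Fintype.equivFin V).toEmbedding.trans (Fin.castLEEmb ?_)⟩
    calc g ≤ r * g := Nat.le_mul_of_pos_left g (by omega)
    _ ≤ N := by omega
  -- step 1: a set X of at most g vertices meeting every b-copy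
  obtain ⟨X, hXcard, hXmeet⟩ : ∃ X : Finset (Fin N), X.card ≤ g ∧
      ∀ f : V ↪ Fin N, (∀ u v, G.Adj u v → c s(f u, f v) = b) → ∃ v, f v ∈ X := by
    by_cases hX : ∃ f : V ↪ Fin N, ∀ u v, G.Adj u v → c s(f u, f v) = b
    · obtain ⟨g₀, hg₀⟩ := hX
      refine ⟨Finset.univ.image g₀, Finset.card_image_le.trans (by simp [hgdef]), ?_⟩
      intro f hf
      by_contra hcontra
      push_neg at hcontra
      have hdisj : ∀ u v, g₀ u ≠ f v := by
        intro u v h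
        exact hcontra v (Finset.mem_image.mpr ⟨u, Finset.mem_univ u, h⟩)
      exact hno ⟨b, two_copies' g₀ f hg₀ hf hdisj
        (fun u v => hb.preconnected _ _) (fun u v => hb.preconnected _ _)
        (fun u v => hb.preconnected _ _)⟩
    · exact ⟨∅, by simp, fun f hf => absurd ⟨f, hf⟩ hX⟩
  set A : Finset (Fin N) := Finset.univ \ X with hAdef
  have hAnob : ∀ f : V ↪ Fin N, (∀ u v, G.Adj u v → c s(f u, f v) = b) →
      ¬ (∀ v, f v ∈ A) := by
    intro f hf hall
    obtain ⟨v, hv⟩ := hXmeet f hf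
    have := hall v
    rw [hAdef, Finset.mem_sdiff] at this
    exact this.2 hv
  have hAcard : N - g ≤ A.card := by
    have h1 : A.card = N - X.card := by
      rw [hAdef, Finset.card_sdiff_of_subset (Finset.subset_univ X), Finset.card_univ, Fintype.card_fin]
    rw [h1]
    exact Nat.sub_le_sub_left hXcard N
  -- components of the w-colored graph
  set κ : Fin N → (colorGraph c w).ConnectedComponent :=
    (colorGraph c w).connectedComponentMk with hκdef
  have hκadj : ∀ x y : Fin N, x ≠ y → c s(x, y) = w → κ x = κ y := by
    intro x y hxy hcxy
    exact SimpleGraph.ConnectedComponent.sound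
      ((colorGraph_adj' c w x y).mpr ⟨hcxy, hxy⟩).reachable
  set 𝒯 : Set ((colorGraph c w).ConnectedComponent) :=
    {E | ∃ f : V ↪ Fin N, (∀ u v, G.Adj u v → c s(f u, f v) = w) ∧
      (∀ v, f v ∈ A) ∧ (∀ v, κ (f v) = E)} with h𝒯def
  haveI : Finite ((colorGraph c w).ConnectedComponent) := by
    exact Finite.of_surjective κ (fun E => E.exists_rep)
  have h𝒯fin : 𝒯.Finite := Set.toFinite 𝒯
  set TF : Finset ((colorGraph c w).ConnectedComponent) := h𝒯fin.toFinset with hTFdef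
  set FE : (colorGraph c w).ConnectedComponent → (V ↪ Fin N) := fun E =>
    if h : E ∈ 𝒯 then h.choose else Classical.choice hembne with hFEdef
  have hFE : ∀ E (h : E ∈ 𝒯), (∀ u v, G.Adj u v → c s(FE E u, FE E v) = w) ∧
      (∀ v, FE E v ∈ A) ∧ (∀ v, κ (FE E v) = E) := by
    intro E h
    rw [hFEdef]
    simp only [dif_pos h]
    exact h.choose_spec
  set Y : Finset (Fin N) := TF.biUnion (fun E => Finset.univ.image (FE E)) with hYdef
  set Z : Finset (Fin N) := A \ Y with hZdef
  have hZA : ∀ x ∈ Z, x ∈ A := fun x hx => (Finset.mem_sdiff.mp hx).1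
  -- number of relevant components is < r
  have hTFcard : TF.card ≤ r - 1 := by
    by_contra hk
    push_neg at hk
    have hkr : r ≤ TF.card := by omega
    obtain ⟨T', hT'sub, hT'card⟩ := Finset.exists_subset_card_eq hkr
    have eT : Fin r ≃ {x // x ∈ T'} := (T'.equivFin.trans (finCongr hT'card)).symm
    set ι : Fin r → (colorGraph c w).ConnectedComponent := fun j => (eT j).1 with hιdef
    have hιinj : Function.Injective ι := by
      intro a b' hab
      exact eT.injective (Subtype.ext hab)
    have hι𝒯 : ∀ j, ι j ∈ 𝒯 := by
      intro j
      have := hT'sub (eT j).2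
      rwa [hTFdef, Set.Finite.mem_toFinset] at this
    obtain ⟨C⟩ := colorable_of_chrom' G hr
    have hbig : Function.Injective (fun v : V => FE (ι (C v)) v) := by
      intro u v huv
      simp only at huv
      by_cases hC : C u = C v
      · rw [hC] at huv
        exact (FE (ι (C v))).injective huv
      · exfalso
        have h1 := (hFE _ (hι𝒯 (C u))).2.2 u
        have h2 := (hFE _ (hι𝒯 (C v))).2.2 v
        rw [huv] at h1
        rw [h1] at h2
        exact hC (hιinj h2)
    have hbigb : ∀ u v, G.Adj u v → c s(FE (ι (C u)) u, FE (ι (C v)) v) = b := by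
      intro u v huv
      have hCuv : C u ≠ C v := C.valid huv
      have hne : FE (ι (C u)) u ≠ FE (ι (C v)) v := fun h => hCuv (by
        have h1 := (hFE _ (hι𝒯 (C u))).2.2 u
        have h2 := (hFE _ (hι𝒯 (C v))).2.2 v
        rw [h] at h1
        rw [h1] at h2
        exact hιinj h2)
      refine fin2_other hbw ?_
      intro hcw
      have := hκadj _ _ hne hcw
      have h1 := (hFE _ (hι𝒯 (C u))).2.2 u
      have h2 := (hFE _ (hι𝒯 (C v))).2.2 v
      rw [h1, h2] at this
      exact hCuv (hιinj this)
    have hbigA : ∀ v, (⟨fun v => FE (ι (C v)) v, hbig⟩ : V ↪ Fin N) v ∈ A := by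
      intro v
      exact (hFE _ (hι𝒯 (C v))).2.1 v
    exact hAnob ⟨fun v => FE (ι (C v)) v, hbig⟩ hbigb hbigA
  -- Z contains no monochromatic copy
  have hZsmall : Z.card ≤ R - 1 := by
    by_contra hZ
    push_neg at hZ
    have hZR : R ≤ Z.card := by omega
    obtain ⟨i, f, hfc, hfZ⟩ := mono_in_subset' G c Z hZR
    by_cases hiw : i = w
    · rw [hiw] at hfc
      obtain ⟨v₀⟩ := hVne
      set E₀ := κ (f v₀) with hE₀def
      have hsame : ∀ v, κ (f v) = E₀ := by
        intro v
        exact SimpleGraph.ConnectedComponent.sound (copy_reachable' hconn f hfc v v₀)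
      have hE₀𝒯 : E₀ ∈ 𝒯 := ⟨f, hfc, fun v => hZA _ (hfZ v), hsame⟩
      have hspec := hFE E₀ hE₀𝒯
      have hdisj : ∀ u v, FE E₀ u ≠ f v := by
        intro u v h
        have hfvZ := hfZ v
        rw [hZdef, Finset.mem_sdiff] at hfvZ
        apply hfvZ.2
        rw [hYdef]
        refine Finset.mem_biUnion.mpr ⟨E₀, ?_, Finset.mem_image.mpr ⟨u, Finset.mem_univ u, h⟩⟩
        rw [hTFdef, Set.Finite.mem_toFinset]
        exact hE₀𝒯
      have hreach : ∀ x y : Fin N, κ x = E₀ → κ y = E₀ → (colorGraph c w).Reachable x y := by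
        intro x y h1 h2
        exact SimpleGraph.ConnectedComponent.exact (h1.trans h2.symm)
      exact hno ⟨w, two_copies' (FE E₀) f hspec.1 hfc hdisj
        (fun u v => hreach _ _ (hspec.2.2 u) (hspec.2.2 v))
        (fun u v => hreach _ _ (hsame u) (hsame v))
        (fun u v => hreach _ _ (hspec.2.2 u) (hsame v))⟩
    · have hib : i = b := fin2_other hbw hiw
      subst hib
      exact hAnob f hfc (fun v => hZA _ (hfZ v))
  -- final counting
  have hYcard : Y.card ≤ (r - 1) * g := by
    calc Y.card ≤ ∑ E ∈ TF, (Finset.univ.image (FE E)).card := Finset.card_biUnion_le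
    _ ≤ ∑ E ∈ TF, g := Finset.sum_le_sum (fun E _ => Finset.card_image_le.trans (by simp [hgdef]))
    _ = TF.card * g := by rw [Finset.sum_const, smul_eq_mul]
    _ ≤ (r - 1) * g := Nat.mul_le_mul_right g hTFcard
  have hAZY : A.card ≤ Z.card + Y.card := by
    have h1 : Z.card + Y.card = (A ∪ Y).card := by
      rw [hZdef]
      exact Finset.card_sdiff_add_card A Y
    have h2 : A.card ≤ (A ∪ Y).card := Finset.card_le_card Finset.subset_union_left
    exact h2.trans h1.ge
  have hrg : (r - 1) * g + g = r * g := by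
    have h : r - 1 + 1 = r := by omega
    calc (r - 1) * g + g = (r - 1 + 1) * g := by ring
    _ = r * g := by rw [h]
  have hN' : R + r * g ≤ N := hN
  have h1 : A.card ≤ R - 1 + (r - 1) * g := le_trans hAZY (Nat.add_le_add hZsmall hYcard)
  have h2 : N - g ≤ R - 1 + (r - 1) * g := le_trans hAcard h1
  have h3 : N ≤ R - 1 + (r - 1) * g + g := Nat.sub_le_iff_le_add.mp h2
  rw [add_assoc, hrg] at h3
  have h6 : R ≤ R - 1 := Nat.le_of_add_le_add_right (le_trans hN' h3)
  have h7 : R - 1 < R := Nat.sub_lt (Nat.lt_of_lt_of_le Nat.zero_lt_one hR1) Nat.one_pos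
  exact absurd h6 (not_le.mpr h7)

/-- For a connected graph `G` with `χ(G) = r ≥ 4`,
`R₂(𝒞(2G)) ≤ (r−1)(R₂(G)−1) + 2s(G)`. -/
theorem stmt15 {V : Type*} [Fintype V] (G : SimpleGraph V) (hconn : G.Connected)
    (r : ℕ) (hr : G.chromaticNumber = (r : ℕ∞)) (hr4 : 4 ≤ r) :
    ramseyConn (nCopies 2 G) ≤ (r - 1) * (ramsey G 2 - 1) + 2 * minClass G r := by
  classical
  have hBurr : (r - 1) * (Fintype.card V - 1) + minClass G r ≤ ramsey G 2 :=
    burr' G hconn hr (by omega)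
  have hs1 : 1 ≤ minClass G r := one_le_minClass' G hr (by omega)
  have hrg : r ≤ Fintype.card V := r_le_card' G hr
  have hR1 : 1 ≤ ramsey G 2 := by
    have : (r - 1) * (Fintype.card V - 1) + minClass G r ≥ 1 := by omega
    omega
  have hN : ramsey G 2 + r * Fintype.card V ≤ (r - 1) * (ramsey G 2 - 1) + 2 * minClass G r :=
    arith_main hr4 hrg hs1 hBurr
  refine Nat.sInf_le ?_
  intro c
  have hN1 : 1 ≤ (r - 1) * (ramsey G 2 - 1) + 2 * minClass G r := by omega
  obtain ⟨i, hi⟩ := exists_connected_color' hN1 c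
  by_cases hib : i = 0
  · subst hib
    exact main_aux' G hconn c 0 1 (by decide) hi r hr hr4 hR1 hN
  · have : i = 1 := fin2_eq_one' hib
    subst this
    exact main_aux' G hconn c 1 0 (by decide) hi r hr hr4 hR1 hN
end

section
/- For every connected graph G with χ(G) ≥ 4, R_3(2G) ≥ (χ(G)−1)(R_2(G)−1) + 2s(G): there is a 3-edge-coloring of K_N with N = (χ(G)−1)(R_2(G)−1) + 2s(G) − 1 containing no monochromatic copy of 2G. -/
open SimpleGraph

open Finset in
lemma ramseyV : ∀ (M k : ℕ), 0 < k → ∀ v : Fin k → ℕ, (∑ i, v i) ≤ M →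
    ∃ n, ∀ c : Sym2 (Fin n) → Fin k, ∃ (i : Fin k) (f : Fin (v i) ↪ Fin n),
      ∀ a b, a ≠ b → c s(f a, f b) = i := by
  intro M
  induction M with
  | zero =>
    intro k hk v hv
    refine ⟨0, fun c => ⟨⟨0, hk⟩, ⟨fun a => ?_, fun a => ?_⟩, fun a => ?_⟩⟩ <;>
    · have h0 : v ⟨0, hk⟩ = 0 := by
        have := Finset.single_le_sum (f := v) (fun _ _ => Nat.zero_le _)
          (Finset.mem_univ ⟨0, hk⟩)
        omega
      exact absurd a.2 (by omega)
  | succ M ih =>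
    intro k hk v hv
    by_cases h0 : ∃ i, v i = 0
    · obtain ⟨i, hi⟩ := h0
      exact ⟨0, fun c => ⟨i, ⟨fun a => absurd a.2 (by omega), fun a => absurd a.2 (by omega)⟩,
        fun a => absurd a.2 (by omega)⟩⟩
    · push_neg at h0
      have hpos : ∀ i, 1 ≤ v i := fun i => Nat.one_le_iff_ne_zero.2 (h0 i)
      have hch : ∀ i : Fin k, ∃ n, ∀ c : Sym2 (Fin n) → Fin k,
          ∃ (j : Fin k) (f : Fin (Function.update v i (v i - 1) j) ↪ Fin n),
            ∀ a b, a ≠ b → c s(f a, f b) = j := by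
        intro i
        apply ih k hk
        have h1 : v i ≤ ∑ j, v j :=
          Finset.single_le_sum (fun _ _ => Nat.zero_le _) (Finset.mem_univ i)
        have h2 : v i + ∑ j ∈ Finset.univ.erase i, v j = ∑ j, v j :=
          Finset.add_sum_erase _ v (Finset.mem_univ i)
        have h4 : ∑ j, Function.update v i (v i - 1) j
            = v i - 1 + ∑ j ∈ Finset.univ.erase i, v j := by
          rw [Finset.sum_update_of_mem (Finset.mem_univ i), Finset.sdiff_singleton_eq_erase]
        have h3 := hpos i
        omega
      choose nf hnf using hch
      refine ⟨1 + ∑ i, nf i, fun c => ?_⟩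
      set z : Fin (1 + ∑ i, nf i) := ⟨0, by omega⟩ with hz
      have hex : ∃ i, nf i ≤ ((Finset.univ.erase z).filter (fun u => c s(z, u) = i)).card := by
        by_contra hco
        push_neg at hco
        have hsum0 := Finset.card_eq_sum_card_fiberwise
          (f := fun u => c s(z, u)) (s := Finset.univ.erase z) (t := Finset.univ)
          (fun x _ => Finset.mem_univ _)
        have hsum : (Finset.univ.erase z).card
            = ∑ i, ((Finset.univ.erase z).filter (fun u => c s(z, u) = i)).card := by
          simpa using hsum0
        have hlt : ∑ i, ((Finset.univ.erase z).filter (fun u => c s(z, u) = i)).card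
            < ∑ i, nf i :=
          Finset.sum_lt_sum_of_nonempty ⟨⟨0, hk⟩, Finset.mem_univ _⟩ (fun i _ => hco i)
        have hc : (Finset.univ.erase z).card = ∑ i, nf i := by
          rw [Finset.card_erase_of_mem (Finset.mem_univ _)]
          simp
        omega
      obtain ⟨i, hi⟩ := hex
      set Ti := (Finset.univ.erase z).filter (fun u => c s(z, u) = i) with hTi
      let e := Ti.orderEmbOfCardLe hi
      have he : ∀ a, e a ∈ Ti := Ti.orderEmbOfCardLe_mem hi
      have hez : ∀ a, e a ≠ z := fun a =>
        (Finset.mem_erase.1 (Finset.mem_filter.1 (he a)).1).1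
      have hecz : ∀ a, c s(z, e a) = i := fun a => (Finset.mem_filter.1 (he a)).2
      obtain ⟨j, f, hf⟩ := hnf i (fun p => c (p.map e))
      by_cases hji : j = i
      · have hupd : Function.update v i (v i - 1) j = v i - 1 := by
          rw [hji, Function.update_self]
        set D : Fin (v i - 1) → Fin (1 + ∑ i, nf i) :=
          fun a => e (f (Fin.cast hupd.symm a)) with hD
        have hDinj : Function.Injective D := by
          intro a b hab
          have := f.injective (e.injective hab)
          exact Fin.ext (by simpa using congrArg Fin.val this)
        have hfD : ∀ a b : Fin (v i - 1), a ≠ b → c s(D a, D b) = i := by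
          intro a b hab
          have hne : (Fin.cast hupd.symm a) ≠ (Fin.cast hupd.symm b) :=
            fun h => hab (Fin.ext (by simpa using congrArg Fin.val h))
          have := hf _ _ hne
          rw [Sym2.map_pair_eq] at this
          rw [← hji]
          exact this
        refine ⟨i, ⟨fun a => if h : a.1 = 0 then z
          else D ⟨a.1 - 1, by have := a.2; omega⟩, ?_⟩, ?_⟩
        · intro a b hab
          by_cases ha : a.1 = 0 <;> by_cases hb : b.1 = 0 <;>
            simp only [ha, hb, dif_pos, dif_neg, not_false_iff] at hab
          · exact Fin.ext (by omega)
          · exact absurd hab.symm (hez _)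
          · exact absurd hab (hez _)
          · have := hDinj hab
            have := congrArg Fin.val this
            exact Fin.ext (by simp at this; omega)
        · intro a b hne
          by_cases ha : a.1 = 0 <;> by_cases hb : b.1 = 0 <;>
            (show c s((fun a : Fin (v i) => if h : a.1 = 0 then z else D ⟨a.1 - 1, by have := a.2; omega⟩) a, (fun a : Fin (v i) => if h : a.1 = 0 then z else D ⟨a.1 - 1, by have := a.2; omega⟩) b) = i; simp only [Function.Embedding.coeFn_mk, ha, hb, dif_pos, dif_neg, not_false_iff])
          · exact absurd (Fin.ext (by omega) : a = b) hne
          · exact hecz _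
          · rw [Sym2.eq_swap]; exact hecz _
          · refine hfD _ _ ?_
            intro h
            have := congrArg Fin.val h
            simp only at this
            exact hne (Fin.ext (by omega))
      · have hupd : Function.update v i (v i - 1) j = v j := Function.update_of_ne hji _ _
        refine ⟨j, ⟨fun a => e (f (Fin.cast hupd.symm a)), ?_⟩, ?_⟩
        · intro a b hab
          have := f.injective (e.injective hab)
          exact Fin.ext (by simpa using congrArg Fin.val this)
        · intro a b hab
          have hne : (Fin.cast hupd.symm a) ≠ (Fin.cast hupd.symm b) :=
            fun h => hab (Fin.ext (by simpa using congrArg Fin.val h))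
          have := hf _ _ hne
          rwa [Sym2.map_pair_eq] at this


/-! ### Auxiliary lemmas -/

lemma hasMonoCopy_of_restrict {V : Type*} (H : SimpleGraph V) {m n : ℕ} {α : Type*}
    (e : Fin m ↪ Fin n) (c : Sym2 (Fin n) → α)
    (h : hasMonoCopy H (fun p => c (p.map e))) : hasMonoCopy H c := by
  obtain ⟨i, f, hf⟩ := h
  refine ⟨i, f.trans e, fun u v huv => ?_⟩
  have h1 := hf u v huv
  simp only [Sym2.map_pair_eq] at h1
  simpa using h1

lemma ramsey_set_nonempty {V : Type*} [Fintype V] (H : SimpleGraph V) {k : ℕ} (hk : 0 < k) :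
    ∃ n, ∀ c : Sym2 (Fin n) → Fin k, hasMonoCopy H c := by
  obtain ⟨n, hn⟩ := ramseyV (∑ _i : Fin k, Fintype.card V) k hk (fun _ => Fintype.card V) le_rfl
  refine ⟨n, fun c => ?_⟩
  obtain ⟨i, f, hf⟩ := hn c
  exact ⟨i, (Fintype.equivFin V).toEmbedding.trans f,
    fun u v huv => hf _ _ ((Fintype.equivFin V).injective.ne huv.ne)⟩

lemma walk_const {V : Type*} {G : SimpleGraph V} (h : G.Connected) {β : Type*} (t : V → β)
    (ht : ∀ u v, G.Adj u v → t u = t v) (u v : V) : t u = t v := by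
  obtain ⟨w⟩ := h.preconnected u v
  induction w with
  | nil => rfl
  | cons ha _ ih => exact (ht _ _ ha).trans ih

/-- The three-coloring used in the construction. -/
def Fc (r R s : ℕ) (c₀ : Sym2 (Fin (R - 1)) → Fin 2) :
    (Fin (r - 1) × Fin (R - 1)) ⊕ Fin (2 * s - 1) →
    (Fin (r - 1) × Fin (R - 1)) ⊕ Fin (2 * s - 1) → Fin 3
  | Sum.inl p, Sum.inl q => if p.1 = q.1 then Fin.castSucc (c₀ s(p.2, q.2)) else 2
  | Sum.inl _, Sum.inr _ => 2
  | Sum.inr _, Sum.inl _ => 2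
  | Sum.inr _, Sum.inr _ => 0

lemma Fc_symm (r R s : ℕ) (c₀ : Sym2 (Fin (R - 1)) → Fin 2) :
    ∀ a b, Fc r R s c₀ a b = Fc r R s c₀ b a := by
  rintro (⟨b1, x1⟩ | y1) (⟨b2, x2⟩ | y2) <;> simp only [Fc]
  by_cases h : b1 = b2
  · subst h; simp [Sym2.eq_swap]
  · rw [if_neg h, if_neg (Ne.symm h)]

lemma construction {V : Type*} [Fintype V] (G : SimpleGraph V) (hconn : G.Connected)
    (r : ℕ) (hr : G.chromaticNumber = (r : ℕ∞)) (hr4 : 4 ≤ r) :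
    ∃ c : Sym2 (Fin ((r - 1) * (ramsey G 2 - 1) + 2 * minClass G r - 1)) → Fin 3,
      ¬ hasMonoCopy (nCopies 2 G) c := by
  classical
  have hVne : Nonempty V := hconn.nonempty
  have hcolr : G.Colorable r := SimpleGraph.chromaticNumber_le_iff_colorable.mp (le_of_eq hr)
  have C0 : G.Coloring (Fin r) := hcolr.toColoring (by simp)
  set R := ramsey G 2 with hRdef
  set s := minClass G r with hsdef
  have hclass : ∀ (C : G.Coloring (Fin r)) (i : Fin r), s ≤ Nat.card {v : V | C v = i} :=
    fun C i => Nat.sInf_le ⟨C, i, rfl⟩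
  -- `s ≥ 1`
  have hs1 : 1 ≤ s := by
    rcases Nat.eq_zero_or_pos s with h0 | h
    swap
    · exact h
    exfalso
    have h0' : sInf {n | ∃ (C : G.Coloring (Fin r)) (i : Fin r),
        n = Nat.card {v : V | C v = i}} = 0 := h0
    rcases Nat.sInf_eq_zero.mp h0' with hmem | hempty
    · obtain ⟨C, i, hCi⟩ := hmem
      have hie : ∀ v : V, C v ≠ i := by
        have he : IsEmpty {v : V | C v = i} := by
          rcases Nat.card_eq_zero.mp hCi.symm with h | h
          · exact h
          · exact absurd h (not_infinite_iff_finite.mpr (Set.toFinite _))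
        intro v hv
        exact he.false ⟨v, hv⟩
      have hvalid : ∀ {u w : V}, G.Adj u w →
          (⟨C u, hie u⟩ : {j : Fin r // j ≠ i}) ≠ ⟨C w, hie w⟩ := by
        intro u w huw h
        exact C.valid huw (by simpa using congrArg Subtype.val h)
      have hcol : G.Colorable (Fintype.card {j : Fin r // j ≠ i}) :=
        (SimpleGraph.Coloring.mk _ hvalid).colorable
      have hcard : Fintype.card {j : Fin r // j ≠ i} = r - 1 := by
        simp [Fintype.card_subtype_compl]
      rw [hcard] at hcol
      have hle := hcol.chromaticNumber_le
      rw [hr] at hle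
      have : r ≤ r - 1 := by exact_mod_cast hle
      omega
    · have hmem2 : Nat.card {v : V | C0 v = ⟨0, by omega⟩} ∈
          {n | ∃ (C : G.Coloring (Fin r)) (i : Fin r), n = Nat.card {v : V | C v = i}} :=
        ⟨C0, _, rfl⟩
      rw [hempty] at hmem2
      exact hmem2
  -- `|V| > 2s - 1`
  have hbig : 2 * s - 1 < Fintype.card V := by
    have hsum0 := Finset.card_eq_sum_card_fiberwise
      (f := fun v => C0 v) (s := Finset.univ) (t := Finset.univ) (fun x _ => Finset.mem_univ _)
    have hcards : Fintype.card V
        = ∑ i : Fin r, (Finset.univ.filter (fun v => C0 v = i)).card := by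
      rw [← Finset.card_univ]
      simpa using hsum0
    have hfib : ∀ i : Fin r, s ≤ (Finset.univ.filter (fun v => C0 v = i)).card := by
      intro i
      have h1 := hclass C0 i
      have h2 : Nat.card {v : V | C0 v = i}
          = (Finset.univ.filter (fun v => C0 v = i)).card := by
        simp [Nat.card_eq_fintype_card, Fintype.card_subtype]
      omega
    have hge : ∑ _i : Fin r, s
        ≤ ∑ i : Fin r, (Finset.univ.filter (fun v => C0 v = i)).card :=
      Finset.sum_le_sum (fun i _ => hfib i)
    have hconstsum : ∑ _i : Fin r, s = r * s := by
      simp [Finset.sum_const, mul_comm]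
    have h4 : 4 * s ≤ r * s := Nat.mul_le_mul_right s hr4
    omega
  -- a good 2-coloring on `R - 1` vertices
  have hc0ex : ∃ c₀ : Sym2 (Fin (R - 1)) → Fin 2, ¬ hasMonoCopy G c₀ := by
    rcases Nat.eq_zero_or_pos R with hR0 | hRpos
    · refine ⟨fun _ => 0, ?_⟩
      rintro ⟨i, f, -⟩
      obtain ⟨v⟩ := hVne
      have := (f v).2
      omega
    · have hnm : R - 1 ∉ {n | ∀ c : Sym2 (Fin n) → Fin 2, hasMonoCopy G c} := by
        apply Nat.notMem_of_lt_sInf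
        have : sInf {n | ∀ c : Sym2 (Fin n) → Fin 2, hasMonoCopy G c} = R := rfl
        omega
      simp only [Set.mem_setOf_eq, not_forall] at hnm
      exact hnm
  obtain ⟨c₀, hc₀⟩ := hc0ex
  have hcast : (r - 1) * (R - 1) + (2 * s - 1) = (r - 1) * (R - 1) + 2 * s - 1 := by omega
  let eqv : Fin ((r - 1) * (R - 1) + 2 * s - 1) ≃
      ((Fin (r - 1) × Fin (R - 1)) ⊕ Fin (2 * s - 1)) :=
    ((Equiv.sumCongr finProdFinEquiv (Equiv.refl _)).trans
      (finSumFinEquiv.trans (finCongr hcast))).symm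
  refine ⟨fun p => Sym2.lift ⟨Fc r R s c₀, Fc_symm r R s c₀⟩ (p.map eqv), ?_⟩
  rintro ⟨i, f, hf⟩
  set g : Fin 2 × V → ((Fin (r - 1) × Fin (R - 1)) ⊕ Fin (2 * s - 1)) :=
    fun a => eqv (f a) with hgdef
  have hginj : Function.Injective g := fun a b h => f.injective (eqv.injective h)
  have hg : ∀ u v, (nCopies 2 G).Adj u v → Fc r R s c₀ (g u) (g v) = i := by
    intro u v huv
    have h1 := hf u v huv
    simp only [Sym2.map_pair_eq, Sym2.lift_mk] at h1
    exact h1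
  obtain ⟨iv, hivlt⟩ := i
  have hadj0 : ∀ u v, G.Adj u v → Fc r R s c₀ (g (0, u)) (g (0, v)) = ⟨iv, hivlt⟩ :=
    fun u v h => hg _ _ ⟨rfl, h⟩
  by_cases hiv2 : iv = 2
  · -- green case
    subst hiv2
    set tagr : ((Fin (r - 1) × Fin (R - 1)) ⊕ Fin (2 * s - 1)) → Fin r :=
      Sum.elim (fun p => ⟨p.1.1, lt_of_lt_of_le p.1.2 (Nat.sub_le r 1)⟩)
        (fun _ => ⟨r - 1, by omega⟩) with htagr
    have hproper : ∀ (k : Fin 2) (u v : V), G.Adj u v →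
        tagr (g (k, u)) ≠ tagr (g (k, v)) := by
      intro k u v huv
      have hFe := hg (k, u) (k, v) ⟨rfl, huv⟩
      rcases hgu : g (k, u) with p | y <;> rcases hgv : g (k, v) with q | y' <;>
        rw [hgu, hgv] at hFe
      · by_cases hb : p.1 = q.1
        · exfalso
          have hv := congrArg Fin.val hFe
          simp only [Fc, if_pos hb, Fin.coe_castSucc] at hv
          have h2 : ((⟨2, hivlt⟩ : Fin 3)).val = 2 := rfl
          have := (c₀ s(p.2, q.2)).2
          omega
        · simp only [htagr, Sum.elim_inl]
          intro h
          exact hb (Fin.ext (by simpa using congrArg Fin.val h))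
      · simp only [htagr, Sum.elim_inl, Sum.elim_inr]
        intro h
        have := congrArg Fin.val h
        simp only at this
        have := p.1.2
        omega
      · simp only [htagr, Sum.elim_inl, Sum.elim_inr]
        intro h
        have := congrArg Fin.val h
        simp only at this
        have := q.1.2
        omega
      · exfalso
        have hv := congrArg Fin.val hFe
        simp only [Fc] at hv
        have h0 : ((0 : Fin 3)).val = 0 := rfl
        have h2 : ((⟨2, hivlt⟩ : Fin 3)).val = 2 := rfl
        omega
    have hcol : ∀ k : Fin 2,
        s ≤ Nat.card {u : V | tagr (g (k, u)) = (⟨r - 1, by omega⟩ : Fin r)} := by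
      intro k
      exact hclass (SimpleGraph.Coloring.mk (fun u => tagr (g (k, u)))
        (fun {u v} h => hproper k u v h)) _
    have hinr : ∀ ω, tagr ω = (⟨r - 1, by omega⟩ : Fin r) → ∃ y, ω = Sum.inr y := by
      rintro (p | y) h
      · exfalso
        have := congrArg Fin.val h
        simp only [htagr, Sum.elim_inl] at this
        have := p.1.2
        omega
      · exact ⟨y, rfl⟩
    set yof : ((Fin (r - 1) × Fin (R - 1)) ⊕ Fin (2 * s - 1)) → Fin (2 * s - 1) :=
      Sum.elim (fun _ => ⟨0, by omega⟩) id with hyof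
    set Φ : ({u : V | tagr (g ((0 : Fin 2), u)) = (⟨r - 1, by omega⟩ : Fin r)} ⊕
        {u : V | tagr (g ((1 : Fin 2), u)) = (⟨r - 1, by omega⟩ : Fin r)}) → Fin (2 * s - 1) :=
      Sum.elim (fun p => yof (g (0, p.1))) (fun p => yof (g (1, p.1))) with hΦ
    have hΦinj : Function.Injective Φ := by
      rintro (⟨u, hu⟩ | ⟨u, hu⟩) (⟨u', hu'⟩ | ⟨u', hu'⟩) h <;>
        obtain ⟨y, hy⟩ := hinr _ hu <;> obtain ⟨y', hy'⟩ := hinr _ hu' <;>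
        simp only [hΦ, Sum.elim_inl, Sum.elim_inr, hy, hy', hyof, id] at h <;>
        subst h
      · have := hginj (hy.trans hy'.symm)
        simp only [Prod.mk.injEq, true_and] at this
        exact congrArg Sum.inl (Subtype.ext this)
      · exfalso
        have := hginj (hy.trans hy'.symm)
        simp only [Prod.mk.injEq] at this
        exact absurd this.1 (by decide)
      · exfalso
        have := hginj (hy.trans hy'.symm)
        simp only [Prod.mk.injEq] at this
        exact absurd this.1 (by decide)
      · have := hginj (hy.trans hy'.symm)
        simp only [Prod.mk.injEq, true_and] at this
        exact congrArg Sum.inr (Subtype.ext this)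
    have hle := Nat.card_le_card_of_injective Φ hΦinj
    rw [Nat.card_sum] at hle
    have h0 := hcol 0
    have h1 := hcol 1
    have hfin : Nat.card (Fin (2 * s - 1)) = 2 * s - 1 := by
      simp [Nat.card_eq_fintype_card]
    omega
  · -- colors 0 and 1
    have hivle : iv < 2 := by omega
    set tg : ((Fin (r - 1) × Fin (R - 1)) ⊕ Fin (2 * s - 1)) → Option (Fin (r - 1)) :=
      Sum.elim (fun p => some p.1) (fun _ => none) with htg
    have hstep : ∀ u v, G.Adj u v → tg (g (0, u)) = tg (g (0, v)) := by
      intro u v huv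
      have hFe := hadj0 u v huv
      rcases hgu : g (0, u) with p | y <;> rcases hgv : g (0, v) with q | y' <;>
        rw [hgu, hgv] at hFe
      · by_cases hb : p.1 = q.1
        · simp [htg, hb]
        · exfalso
          have hv := congrArg Fin.val hFe
          simp only [Fc, if_neg hb] at hv
          have h2 : ((2 : Fin 3)).val = 2 := rfl
          have hmk : ((⟨iv, hivlt⟩ : Fin 3)).val = iv := rfl
          omega
      · exfalso
        have hv := congrArg Fin.val hFe
        simp only [Fc] at hv
        have h2 : ((2 : Fin 3)).val = 2 := rfl
        have hmk : ((⟨iv, hivlt⟩ : Fin 3)).val = iv := rfl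
        omega
      · exfalso
        have hv := congrArg Fin.val hFe
        simp only [Fc] at hv
        have h2 : ((2 : Fin 3)).val = 2 := rfl
        have hmk : ((⟨iv, hivlt⟩ : Fin 3)).val = iv := rfl
        omega
      · simp [htg]
    have hconst2 : ∀ u v, tg (g (0, u)) = tg (g (0, v)) :=
      fun u v => walk_const hconn _ hstep u v
    obtain ⟨v₀⟩ := hVne
    rcases hgv0 : g (0, v₀) with p₀ | y₀
    · have hx : ∀ u, ∃ x, g (0, u) = Sum.inl (p₀.1, x) := by
        intro u
        have hcu := hconst2 u v₀
        rw [hgv0] at hcu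
        rcases hgu : g (0, u) with q | y
        · rw [hgu] at hcu
          simp only [htg, Sum.elim_inl, Option.some_inj] at hcu
          exact ⟨q.2, by rw [← hcu]⟩
        · rw [hgu] at hcu
          simp [htg] at hcu
      choose xf hxf using hx
      have hxinj : Function.Injective xf := by
        intro u u' h
        have heq : g (0, u) = g (0, u') := by rw [hxf u, hxf u', h]
        have := hginj heq
        simpa using congrArg Prod.snd this
      have hmono : ∀ u v, G.Adj u v → c₀ s(xf u, xf v) = ⟨iv, hivle⟩ := by
        intro u v huv
        have hFe := hadj0 u v huv
        rw [hxf u, hxf v] at hFe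
        have hv := congrArg Fin.val hFe
        simp only [Fc, if_pos rfl, Fin.coe_castSucc] at hv
        exact Fin.ext hv
      exact hc₀ ⟨⟨iv, hivle⟩, ⟨xf, hxinj⟩, hmono⟩
    · have hy : ∀ u, ∃ y, g (0, u) = Sum.inr y := by
        intro u
        have hcu := hconst2 u v₀
        rw [hgv0] at hcu
        rcases hgu : g (0, u) with q | y
        · rw [hgu] at hcu
          simp [htg] at hcu
        · exact ⟨y, rfl⟩
      choose yf hyf using hy
      have hyinj : Function.Injective yf := by
        intro u u' h
        have heq : g (0, u) = g (0, u') := by rw [hyf u, hyf u', h]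
        have := hginj heq
        simpa using congrArg Prod.snd this
      have hle := Fintype.card_le_of_injective yf hyinj
      simp only [Fintype.card_fin] at hle
      omega

/-- For a connected graph `G` with `χ(G) = r ≥ 4`, `R₃(2G) ≥ (r−1)(R₂(G)−1) + 2s(G)`:
there is a 3-coloring of `K_N`, `N = (r−1)(R₂(G)−1) + 2s(G) − 1`, with no
monochromatic `2G`. -/
theorem stmt16 {V : Type*} [Fintype V] (G : SimpleGraph V) (hconn : G.Connected)
    (r : ℕ) (hr : G.chromaticNumber = (r : ℕ∞)) (hr4 : 4 ≤ r) :
    (r - 1) * (ramsey G 2 - 1) + 2 * minClass G r ≤ ramsey (nCopies 2 G) 3 ∧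
    ∃ c : Sym2 (Fin ((r - 1) * (ramsey G 2 - 1) + 2 * minClass G r - 1)) → Fin 3,
      ¬ hasMonoCopy (nCopies 2 G) c := by
  obtain ⟨c, hc⟩ := construction G hconn r hr hr4
  refine ⟨?_, ⟨c, hc⟩⟩
  have hne : {n | ∀ cc : Sym2 (Fin n) → Fin 3, hasMonoCopy (nCopies 2 G) cc}.Nonempty := by
    obtain ⟨n, hn⟩ := ramsey_set_nonempty (nCopies 2 G) (by norm_num : (0:ℕ) < 3)
    exact ⟨n, hn⟩
  refine le_csInf hne ?_
  intro m hm
  by_contra hlt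
  push_neg at hlt
  have hm' : m ≤ (r - 1) * (ramsey G 2 - 1) + 2 * minClass G r - 1 := by omega
  exact hc (hasMonoCopy_of_restrict (nCopies 2 G) (Fin.castLEEmb hm') c
    (hm (fun p => c (p.map (Fin.castLEEmb hm')))))
end
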